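/- arXiv:2005.11855 — 7 statements merged into one kernel-verified Lean document; each statement's English description precedes it below -/
import Mathlib

section
/- If a finite undirected graph B is a tree, then B has at most one pivot vertex (where a pivot vertex is a vertex v such that for every neighbor w of v, the orbit of w under the stabilizer of v in the automorphism group of B has even cardinality). -/
open SimpleGraph

/-- The automorphism group of a simple graph, as a subgroup of permutations. -/
def graphAut {V : Type*} (B : SimpleGraph V) : Subgroup (Equiv.Perm V) where
  carrier := {σ | ∀ a b : V, B.Adj (σ a) (σ b) ↔ B.Adj a b}
  one_mem' := by intro a b; rfl
  mul_mem' := by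
    intro σ τ hσ hτ a b
    simpa [Equiv.Perm.mul_apply] using (hσ (τ a) (τ b)).trans (hτ a b)
  inv_mem' := by
    intro σ hσ a b
    simpa using (hσ (σ⁻¹ a) (σ⁻¹ b)).symm

/-- `v` is a `G`-pivot vertex of the graph `B`: for every neighbour `w` of `v`, the orbit of `w`
under the stabilizer of `v` in `G` has even cardinality. -/
def IsPivot {V : Type*} (B : SimpleGraph V) (G : Type*) [Group G] [MulAction G V] (v : V) : Prop :=
  ∀ w : V, B.Adj v w → Even ((MulAction.orbit (MulAction.stabilizer G v) w).ncard)

section TreePivot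
variable {V : Type*} {B : SimpleGraph V}


/-- An automorphism as a graph isomorphism. -/
private def autIso (B : SimpleGraph V) (σ : {σ : Equiv.Perm V // ∀ a b : V, B.Adj (σ a) (σ b) ↔ B.Adj a b}) : B ≃g B :=
  ⟨σ.1, σ.2 _ _⟩

-- any path in a tree has length = dist
private lemma path_len (hB : B.IsTree) {u v : V} {p : B.Walk u v} (hp : p.IsPath) :
    p.length = B.dist u v := by
  classical
  obtain ⟨q, hq⟩ := hB.isConnected.exists_walk_length_eq_dist u v
  have h1 : p = q.bypass := (hB.existsUnique_path u v).unique hp q.bypass_isPath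
  have h2 : B.dist u v ≤ q.bypass.length := SimpleGraph.dist_le _
  have h3 : q.bypass.length ≤ q.length := Walk.length_bypass_le q
  rw [h1]; omega

private lemma exists_geodesic (hB : B.IsTree) (u v : V) :
    ∃ p : B.Walk u v, p.IsPath ∧ p.length = B.dist u v := by
  classical
  obtain ⟨q, hq⟩ := hB.isConnected.exists_walk_length_eq_dist u v
  exact ⟨q.bypass, q.bypass_isPath, path_len hB q.bypass_isPath⟩

private lemma concat_isPath {u v w : V} {p : B.Walk u v} (hp : p.IsPath) (h : B.Adj v w)
    (hw : w ∉ p.support) : (p.concat h).IsPath := by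
  apply Walk.IsPath.mk'
  rw [Walk.support_concat, List.nodup_append]
  exact ⟨hp.support_nodup, List.nodup_singleton w, by simp only [List.mem_singleton]; rintro a ha b rfl rfl; exact hw ha⟩

-- bound for dist to an interior support vertex
private lemma dist_lt_of_mem_support (hB : B.IsTree) {z a w : V} {p : B.Walk z a}
    (hp : p.IsPath) (hmem : w ∈ p.support) (hwa : w ≠ a) : B.dist z w < p.length := by
  obtain ⟨q, r, rfl⟩ := Walk.mem_support_iff_exists_append.mp hmem
  have h1 : B.dist z w ≤ q.length := SimpleGraph.dist_le q
  have h2 : (q.append r).length = q.length + r.length := Walk.length_append q r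
  have h3 : r.length ≠ 0 := fun h0 => hwa (Walk.eq_of_length_eq_zero h0)
  omega

private lemma adj_dist_ne (hB : B.IsTree) {a b : V} (hab : B.Adj a b) (z : V) :
    B.dist z a ≠ B.dist z b := by
  intro h
  obtain ⟨p, hp, hlen⟩ := exists_geodesic hB z a
  by_cases hmem : b ∈ p.support
  · have := dist_lt_of_mem_support hB hp hmem hab.ne'
    omega
  · have hq : (p.concat hab).IsPath := concat_isPath hp hab hmem
    have := path_len hB hq
    rw [Walk.length_concat] at this
    omega

private lemma adj_dist_dichotomy (hB : B.IsTree) {a b : V} (hab : B.Adj a b) (z : V) :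
    B.dist z b = B.dist z a + 1 ∨ B.dist z a = B.dist z b + 1 := by
  have h1 : B.dist z b ≤ B.dist z a + 1 := by
    obtain ⟨p, hp, hlen⟩ := exists_geodesic hB z a
    have := SimpleGraph.dist_le (p.append (Walk.cons hab Walk.nil))
    simp only [Walk.length_append, Walk.length_cons, Walk.length_nil] at this
    omega
  have h2 : B.dist z a ≤ B.dist z b + 1 := by
    obtain ⟨p, hp, hlen⟩ := exists_geodesic hB z b
    have := SimpleGraph.dist_le (p.append (Walk.cons hab.symm Walk.nil))
    simp only [Walk.length_append, Walk.length_cons, Walk.length_nil] at this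
    omega
  have h3 := adj_dist_ne hB hab z
  omega

private lemma nesting (hB : B.IsTree) {y' y x z : V} (h1 : B.Adj y' y) (h2 : B.Adj y x)
    (hne : y' ≠ x) (hz : B.dist z y = B.dist z y' + 1) : B.dist z x = B.dist z y + 1 := by
  rcases adj_dist_dichotomy hB h2 z with h | h
  · exact h
  · -- bad case : dist z x = dist z y' , build two equal paths and contradict
    exfalso
    obtain ⟨p₁, hp₁, hl₁⟩ := exists_geodesic hB z y'
    obtain ⟨p₂, hp₂, hl₂⟩ := exists_geodesic hB z x
    have hy1 : y ∉ p₁.support := fun hm => by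
      have := dist_lt_of_mem_support hB hp₁ hm h1.ne'
      omega
    have hy2 : y ∉ p₂.support := fun hm => by
      have := dist_lt_of_mem_support hB hp₂ hm h2.ne
      omega
    have hP : (p₁.concat h1).IsPath := concat_isPath hp₁ h1 hy1
    have hQ : (p₂.concat h2.symm).IsPath := concat_isPath hp₂ h2.symm hy2
    have heq : p₁.concat h1 = p₂.concat h2.symm := (hB.existsUnique_path z y).unique hP hQ
    have hxP : x ∈ (p₁.concat h1).support := by
      rw [heq, Walk.support_concat]
      simp [Walk.end_mem_support]
    rw [Walk.support_concat] at hxP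
    rw [List.mem_append] at hxP
    rcases hxP with hx1 | hx1
    · have := dist_lt_of_mem_support hB hp₁ hx1 hne.symm
      omega
    · have hxy : x = y := by simpa using hx1
      exact h2.ne hxy.symm

section FintypeV
variable [Fintype V]

/-- Sum of distances to `y`. -/
private noncomputable def Mpot (B : SimpleGraph V) (y : V) : ℤ := ∑ x : V, (B.dist x y : ℤ)

open scoped Classical in
/-- vertices strictly closer to `a` than to `b` (`a`, `b` adjacent). -/
private noncomputable def Wside (B : SimpleGraph V) (a b : V) : Finset V :=
  Finset.univ.filter fun z => B.dist z b = B.dist z a + 1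

private lemma Mpot_sub (hB : B.IsTree) {a b : V} (hab : B.Adj a b) :
    Mpot B b - Mpot B a = 2 * ((Wside B a b).card : ℤ) - (Fintype.card V : ℤ) := by
  classical
  rw [Mpot, Mpot, ← Finset.sum_sub_distrib]
  rw [← Finset.sum_filter_add_sum_filter_not Finset.univ
    (fun z => B.dist z b = B.dist z a + 1)]
  have h1 : ∀ z ∈ Finset.univ.filter (fun z => B.dist z b = B.dist z a + 1),
      ((B.dist z b : ℤ) - (B.dist z a : ℤ)) = 1 := by
    intro z hz
    rw [Finset.mem_filter] at hz
    rw [hz.2]; push_cast; ring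
  have h2 : ∀ z ∈ Finset.univ.filter (fun z => ¬(B.dist z b = B.dist z a + 1)),
      ((B.dist z b : ℤ) - (B.dist z a : ℤ)) = -1 := by
    intro z hz
    rw [Finset.mem_filter] at hz
    rcases adj_dist_dichotomy hB hab z with h | h
    · exact absurd h hz.2
    · rw [h]; push_cast; ring
  rw [Finset.sum_congr rfl h1, Finset.sum_congr rfl h2]
  simp only [Finset.sum_const, nsmul_eq_mul, mul_one, mul_neg_one]
  have hcard : (Finset.univ.filter (fun z => ¬(B.dist z b = B.dist z a + 1))).card
      = Fintype.card V - (Wside B a b).card := by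
    rw [Finset.filter_not, Finset.card_sdiff_of_subset (Finset.filter_subset _ _)]
    rfl
  have hle : (Wside B a b).card ≤ Fintype.card V := by
    exact Finset.card_filter_le _ _
  rw [hcard]
  have : (Wside B a b).card = (Finset.univ.filter
      (fun z => B.dist z b = B.dist z a + 1)).card := rfl
  rw [← this]
  push_cast [Nat.cast_sub hle]
  ring

private lemma exists_pred (hB : B.IsTree) {x c : V} (hne : x ≠ c) :
    ∃ y, B.Adj x y ∧ B.dist c y + 1 = B.dist c x := by
  obtain ⟨p, hp⟩ := hB.isConnected.exists_walk_length_eq_dist x c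
  cases p with
  | nil => exact absurd rfl hne
  | @cons _ y _ h q =>
    refine ⟨y, h, ?_⟩
    have h1 : B.dist y c ≤ q.length := SimpleGraph.dist_le q
    have h2 : B.dist x c ≤ 1 + B.dist y c := by
      have ht := hB.isConnected.dist_triangle (u := x) (v := y) (w := c)
      have : B.dist x y ≤ 1 := by
        have := SimpleGraph.dist_le (Walk.cons h Walk.nil)
        simpa using this
      omega
    rw [Walk.length_cons] at hp
    rw [SimpleGraph.dist_comm (u := c) (v := y), SimpleGraph.dist_comm (u := c) (v := x)]
    omega
end FintypeV

section Aut
variable [Fintype V]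

private lemma aut_adj {σ : Equiv.Perm V} (hσ : ∀ a b : V, B.Adj (σ a) (σ b) ↔ B.Adj a b)
    {a b : V} (h : B.Adj a b) : B.Adj (σ a) (σ b) := (hσ a b).mpr h

private lemma aut_dist_le (hB : B.IsTree) {σ : Equiv.Perm V}
    (hσ : ∀ a b : V, B.Adj (σ a) (σ b) ↔ B.Adj a b) (a b : V) :
    B.dist (σ a) (σ b) ≤ B.dist a b := by
  obtain ⟨p, hp⟩ := hB.isConnected.exists_walk_length_eq_dist a b
  let φ : B →g B := ⟨σ.toFun, fun h => (hσ _ _).mpr h⟩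
  have := SimpleGraph.dist_le (p.map φ)
  rwa [Walk.length_map, hp] at this

private lemma aut_dist (hB : B.IsTree) {σ : Equiv.Perm V}
    (hσ : ∀ a b : V, B.Adj (σ a) (σ b) ↔ B.Adj a b) (a b : V) :
    B.dist (σ a) (σ b) = B.dist a b := by
  refine le_antisymm (aut_dist_le hB hσ a b) ?_
  have hσ' : ∀ a b : V, B.Adj (σ⁻¹ a) (σ⁻¹ b) ↔ B.Adj a b := by
    intro a b
    conv_rhs => rw [← Equiv.apply_symm_apply σ a, ← Equiv.apply_symm_apply σ b]
    exact (hσ _ _).symm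
  have := aut_dist_le hB hσ' (σ a) (σ b)
  simpa using this

private lemma exists_fixed (hB : B.IsTree) (hodd : Odd (Fintype.card V)) :
    ∃ c : V, ∀ σ : Equiv.Perm V, (∀ a b : V, B.Adj (σ a) (σ b) ↔ B.Adj a b) → σ c = c := by
  classical
  have hne : Nonempty V := hB.isConnected.nonempty
  obtain ⟨c, -, hc⟩ := Finset.exists_min_image Finset.univ (Mpot B) ⟨hne.some, Finset.mem_univ _⟩
  have hmin : ∀ x : V, Mpot B c ≤ Mpot B x := fun x => hc x (Finset.mem_univ x)
  obtain ⟨m, hm⟩ := hodd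
  -- main induction : every vertex other than c has strictly bigger potential
  have key : ∀ k : ℕ, ∀ x : V, B.dist c x = k → x ≠ c →
      ∃ y, B.Adj y x ∧ B.dist c y + 1 = k ∧
        (Fintype.card V : ℤ) < 2 * ((Wside B y x).card : ℤ) ∧ Mpot B c < Mpot B x := by
    intro k
    induction k using Nat.strong_induction_on with
    | _ k IH =>
      intro x hk hxc
      obtain ⟨y, hxy, hy⟩ := exists_pred hB hxc
      rw [hk] at hy
      have hk0 : k ≠ 0 := by
        intro h0; subst h0
        exact hxc (hB.isConnected.dist_eq_zero_iff.mp hk).symm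
      by_cases hk1 : k = 1
      · -- base case : y = c
        subst hk1
        have hyc : y = c := by
          have : B.dist c y = 0 := by omega
          exact (hB.isConnected.dist_eq_zero_iff.mp this).symm
        subst hyc
        have hsub := Mpot_sub hB hxy.symm
        have hWle : ((Wside B y x).card : ℤ) ≤ (Fintype.card V : ℤ) := by
          exact_mod_cast Finset.card_filter_le _ _
        have hge : Mpot B y ≤ Mpot B x := hmin x
        refine ⟨y, hxy.symm, by omega, by omega, by omega⟩
      · -- inductive case
        have hyne : y ≠ c := by
          intro h; subst h
          rw [hB.isConnected.dist_eq_zero_iff.mpr rfl] at hy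
          omega
        obtain ⟨y', hy'y, hy', hW', hM'⟩ := IH (k - 1) (by omega) y (by omega) hyne
        have hy'x : y' ≠ x := by
          intro h; subst h
          rw [hk] at hy'
          omega
        have hnest : Wside B y' y ⊆ Wside B y x := by
          intro z hz
          rw [Wside, Finset.mem_filter] at hz ⊢
          exact ⟨Finset.mem_univ z, nesting hB hy'y hxy.symm hy'x hz.2⟩
        have hcard : (Wside B y' y).card ≤ (Wside B y x).card := Finset.card_le_card hnest
        have hsub := Mpot_sub hB hxy.symm
        refine ⟨y, hxy.symm, by omega, by push_cast at hW' ⊢; omega, by omega⟩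
  have hstrict : ∀ x : V, x ≠ c → Mpot B c < Mpot B x := by
    intro x hx
    obtain ⟨-, -, -, -, h⟩ := key (B.dist c x) x rfl hx
    exact h
  refine ⟨c, fun σ hσ => ?_⟩
  by_contra hne'
  have hM : Mpot B (σ c) = Mpot B c := by
    rw [Mpot, Mpot]
    rw [← Equiv.sum_comp σ (fun x => (B.dist x (σ c) : ℤ))]
    congr 1
    ext x
    rw [aut_dist hB hσ]
  have := hstrict (σ c) hne'
  omega

end Aut


section Main
variable [Fintype V]

private lemma exists_step (hB : B.IsTree) {v x : V} (hvx : v ≠ x) :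
    ∃ w, B.Adj v w ∧ ∀ (σ : Equiv.Perm V), (∀ a b : V, B.Adj (σ a) (σ b) ↔ B.Adj a b) →
      σ v = v → σ x = x → σ w = w := by
  obtain ⟨p, hp, hup⟩ := hB.existsUnique_path v x
  cases p with
  | nil => exact absurd rfl hvx
  | @cons _ w _ h q =>
    refine ⟨w, h, fun σ hσ hv hx => ?_⟩
    let φ : B →g B := ⟨σ.toFun, fun hadj => (hσ _ _).mpr hadj⟩
    have hinj : Function.Injective φ := σ.injective
    have hmappath : (((Walk.cons h q).map φ).copy hv hx).IsPath :=
      (Walk.isPath_copy _ hv hx).mpr (Walk.map_isPath_of_injective hinj hp)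
    have heq := hup _ hmappath
    have hsup := congrArg Walk.support heq
    rw [Walk.support_copy, Walk.support_map] at hsup
    rw [Walk.support_cons, q.support_eq_cons] at hsup
    simp only [List.map_cons, List.cons.injEq] at hsup
    exact hsup.2.1

private lemma orbit_even (hB : B.IsTree) {v : V}
    (hv : IsPivot B (graphAut B) v) {x : V} (hx : x ≠ v) :
    Even ((MulAction.orbit (MulAction.stabilizer (graphAut B) v) x).ncard) := by
  obtain ⟨w, hadj, hstep⟩ := exists_step hB (Ne.symm hx)
  have hw : Even ((MulAction.orbit (MulAction.stabilizer (graphAut B) v) w).ncard) := hv w hadj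
  have hle : MulAction.stabilizer (MulAction.stabilizer (graphAut B) v) x ≤
      MulAction.stabilizer (MulAction.stabilizer (graphAut B) v) w := by
    intro g hg
    rw [MulAction.mem_stabilizer_iff] at hg ⊢
    exact hstep ((g : (graphAut B)) : Equiv.Perm V) (g : (graphAut B)).2 g.2 hg
  rw [← MulAction.index_stabilizer] at hw ⊢
  obtain ⟨t, ht⟩ := Subgroup.index_dvd_of_le hle
  rw [ht]
  exact hw.mul_right t

private lemma odd_card (hB : B.IsTree) {v : V} (hv : IsPivot B (graphAut B) v) :
    Odd (Fintype.card V) := by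
  classical
  set K := MulAction.stabilizer (graphAut B) v with hK
  have e := MulAction.selfEquivSigmaOrbits (K) V
  have hcard : Fintype.card V = ∑ ω : MulAction.orbitRel.Quotient K V,
      Fintype.card (MulAction.orbit K ω.out) := by
    rw [Fintype.card_congr e, Fintype.card_sigma]
  have horbv : MulAction.orbit K v = {v} := by
    apply Set.eq_singleton_iff_unique_mem.mpr
    refine ⟨MulAction.mem_orbit_self v, ?_⟩
    rintro y ⟨g, rfl⟩
    exact g.2
  set ω₀ : MulAction.orbitRel.Quotient K V := Quotient.mk'' v with hω₀
  have hout : ω₀.out = v := by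
    have h1 : ω₀.out ∈ ω₀.orbit :=
      MulAction.orbitRel.Quotient.mem_orbit.mpr (Quotient.out_eq' ω₀)
    rw [hω₀, MulAction.orbitRel.Quotient.orbit_mk, horbv] at h1
    exact h1
  have hsplit : Fintype.card V = Fintype.card (MulAction.orbit K ω₀.out) +
      ∑ ω ∈ Finset.univ.erase ω₀, Fintype.card (MulAction.orbit K ω.out) := by
    rw [hcard]
    exact (Finset.add_sum_erase _ _ (Finset.mem_univ ω₀)).symm
  have h1 : Fintype.card (MulAction.orbit K ω₀.out) = 1 := by
    rw [hout, horbv]; simp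
  have heven : Even (∑ ω ∈ Finset.univ.erase ω₀,
      Fintype.card (MulAction.orbit K ω.out)) := by
    apply Finset.even_sum
    intro ω hω
    have hωne : ω.out ≠ v := by
      intro h
      have : ω = ω₀ := by rw [hω₀, ← h, Quotient.out_eq']
      exact (Finset.mem_erase.mp hω).1 this
    have he := orbit_even hB hv hωne
    rwa [← Nat.card_coe_set_eq, Nat.card_eq_fintype_card] at he
  obtain ⟨t, ht⟩ := heven
  rw [hsplit, h1, ht]
  exact ⟨t, by ring⟩

end Main

end TreePivot

/-- If a finite graph `B` is a tree, then `B` has at most one pivot vertex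
(pivot vertex = `Aut(B)`-pivot vertex). -/
theorem stmt_0 {V : Type*} [Fintype V] (B : SimpleGraph V) (hB : B.IsTree) :
    {v : V | IsPivot B (graphAut B) v}.Subsingleton := by
  intro v hv u hu
  simp only [Set.mem_setOf_eq] at hv hu
  obtain ⟨c, hc⟩ := exists_fixed hB (odd_card hB hv)
  have hpc : ∀ z : V, IsPivot B (graphAut B) z → z = c := by
    intro z hz
    by_contra hzc
    have he := orbit_even hB hz (x := c) (Ne.symm hzc)
    have horb : MulAction.orbit (MulAction.stabilizer (graphAut B) z) c = {c} := by
      apply Set.eq_singleton_iff_unique_mem.mpr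
      refine ⟨MulAction.mem_orbit_self c, ?_⟩
      rintro y ⟨g, rfl⟩
      show ((g : (graphAut B)) : Equiv.Perm V) c = c
      exact hc ((g : (graphAut B)) : Equiv.Perm V) (g : (graphAut B)).2
    rw [horb] at he
    norm_num [Set.ncard_singleton] at he
  rw [hpc v hv, hpc u hu]
end

section
/- Let B be a finite connected graph with a group G acting by graph automorphisms, and suppose some vertex v0 is fixed by G. Let W be the set of G-pivot vertices of B. Then |W \ {v0}| ≤ β(B), where β(B) = |E| - |V| + 1 is the Betti number of B. -/
open SimpleGraph

/-- If a group `G` acts on a finite connected graph `B` by graph automorphisms and fixes a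
vertex `v0`, then the set `W` of `G`-pivot vertices satisfies `|W \ {v0}| ≤ β(B)`,
where `β(B) = |E| - |V| + 1`. -/
theorem stmt_1 {V : Type*} [Fintype V] (B : SimpleGraph V)
    (G : Type*) [Group G] [MulAction G V]
    (hact : ∀ (g : G) (a b : V), B.Adj a b → B.Adj (g • a) (g • b))
    (hconn : B.Connected)
    (v0 : V) (hv0 : ∀ g : G, g • v0 = v0) :
    (({v : V | IsPivot B G v} \ {v0}).ncard : ℤ)
      ≤ (B.edgeSet.ncard : ℤ) - (Fintype.card V : ℤ) + 1 := by
  classical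
  set d : V → ℕ := B.dist v0 with hd
  have hdist_le : ∀ (g : G) (a b : V), B.dist (g • a) (g • b) ≤ B.dist a b := by
    intro g a b
    obtain ⟨p, hp⟩ := hconn.exists_walk_length_eq_dist a b
    let f : B →g B := ⟨fun x => g • x, fun h => hact g _ _ h⟩
    calc B.dist (g • a) (g • b) ≤ (p.map f).length := SimpleGraph.dist_le _
    _ = p.length := p.length_map f
    _ = _ := hp
  have hdist : ∀ (g : G) (a b : V), B.dist (g • a) (g • b) = B.dist a b := by
    intro g a b
    refine le_antisymm (hdist_le g a b) ?_
    have := hdist_le g⁻¹ (g • a) (g • b)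
    simpa using this
  have hdown : ∀ v : V, v ≠ v0 → ∃ w, B.Adj v w ∧ d w + 1 = d v := by
    intro v hv
    obtain ⟨p, hp⟩ := hconn.exists_walk_length_eq_dist v v0
    cases p with
    | nil => exact absurd rfl hv
    | @cons _ w _ h q =>
      refine ⟨w, h, ?_⟩
      have h1 : B.dist v0 w ≤ q.length := by
        rw [SimpleGraph.dist_comm]; exact SimpleGraph.dist_le q
      have h2 : B.dist v0 v ≤ B.dist v0 w + 1 := by
        have := hconn.dist_triangle (u := v0) (v := w) (w := v)
        have hwv : B.dist w v = 1 := SimpleGraph.dist_eq_one_iff_adj.2 h.symm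
        omega
      have h3 : q.length + 1 = B.dist v0 v := by
        simp only [SimpleGraph.Walk.length_cons] at hp
        rw [SimpleGraph.dist_comm]; omega
      show B.dist v0 w + 1 = B.dist v0 v
      omega
  have hd : d = B.dist v0 := hd
  have hdown' : ∀ v : V, v ≠ v0 → ∃ w, B.Adj v w ∧ d w < d v := by
    intro v hv
    obtain ⟨w, h1, h2⟩ := hdown v hv
    exact ⟨w, h1, by omega⟩
  -- a second down-neighbor for pivots, distinct from any given one
  have hpiv : ∀ v : V, IsPivot B G v → v ≠ v0 → ∀ u : V,
      ∃ w, w ≠ u ∧ B.Adj v w ∧ d w < d v := by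
    intro v hpv hv u
    obtain ⟨w, hw, hwd⟩ := hdown v hv
    have horb := hpv w hw
    have hmem : w ∈ MulAction.orbit (MulAction.stabilizer G v) w := MulAction.mem_orbit_self w
    have hfin : (MulAction.orbit (MulAction.stabilizer G v) w).Finite := Set.toFinite _
    have hne1 : (MulAction.orbit (MulAction.stabilizer G v) w).ncard ≠ 1 := by
      intro h1; rw [h1] at horb; exact (Nat.not_even_iff_odd.2 odd_one) horb
    have : ∃ x ∈ MulAction.orbit (MulAction.stabilizer G v) w, x ≠ w := by
      by_contra hcon
      push_neg at hcon
      have : MulAction.orbit (MulAction.stabilizer G v) w = {w} :=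
        Set.eq_singleton_iff_unique_mem.2 ⟨hmem, hcon⟩
      rw [this, Set.ncard_singleton] at horb
      exact (Nat.not_even_iff_odd.2 odd_one) horb
    obtain ⟨x, hx, hxw⟩ := this
    obtain ⟨g, rfl⟩ := hx
    have hgv : (g : G) • v = v := g.2
    have hadjx : B.Adj v ((g : G) • w) := by
      have := hact (g : G) v w hw
      rwa [hgv] at this
    have hdx : d ((g : G) • w) = d w := by
      rw [hd]
      conv_lhs => rw [← hv0 (g : G)]
      exact hdist (g : G) v0 w
    -- pick whichever of w, g•w differs from u
    by_cases hcase : w = u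
    · refine ⟨(g : G) • w, ?_, hadjx, by omega⟩
      rw [← hcase]; exact hxw
    · exact ⟨w, hcase, hw, by omega⟩
  -- counting
  let S : Finset (V × V) := Finset.univ.filter fun p => B.Adj p.1 p.2 ∧ d p.2 < d p.1
  have hScard : S.card ≤ B.edgeSet.ncard := by
    have hfinE : B.edgeSet.Finite := Set.toFinite _
    rw [Set.ncard_eq_toFinset_card _ hfinE]
    refine Finset.card_le_card_of_injOn (fun p : V × V => s(p.1, p.2)) ?_ ?_
    · intro p hp
      simp only [S, Finset.mem_coe, Finset.mem_filter] at hp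
      simp [Set.Finite.mem_toFinset, SimpleGraph.mem_edgeSet]
      exact hp.2.1
    · intro p hp q hq hpq
      simp only [S, Finset.mem_coe, Finset.mem_filter] at hp hq
      rw [Sym2.mk_eq_mk_iff] at hpq
      rcases hpq with h | h
      · exact h
      · exfalso
        have h1 : p.1 = q.2 := congrArg Prod.fst h
        have h2 : p.2 = q.1 := congrArg Prod.snd h
        have e1 : d p.1 = d q.2 := by rw [h1]
        have e2 : d p.2 = d q.1 := by rw [h2]
        have := hp.2.2; have := hq.2.2
        omega
  -- the two injections
  let w1 : V → V := fun v => if h : v = v0 then v else (hdown' v h).choose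
  have hw1 : ∀ v, v ≠ v0 → B.Adj v (w1 v) ∧ d (w1 v) < d v := by
    intro v hv
    simp only [w1, dif_neg hv]
    exact (hdown' v hv).choose_spec
  let w2 : V → V := fun v => if h : IsPivot B G v ∧ v ≠ v0 then (hpiv v h.1 h.2 (w1 v)).choose else v
  have hw2 : ∀ v, IsPivot B G v → v ≠ v0 →
      w2 v ≠ w1 v ∧ B.Adj v (w2 v) ∧ d (w2 v) < d v := by
    intro v h1 h2
    simp only [w2, dif_pos (And.intro h1 h2)]
    exact (hpiv v h1 h2 (w1 v)).choose_spec
  let T : Finset V := Finset.univ.filter fun v => v ≠ v0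
  let W' : Finset V := Finset.univ.filter fun v => IsPivot B G v ∧ v ≠ v0
  have hT : T.card + 1 = Fintype.card V := by
    have : T = Finset.univ \ {v0} := by
      ext v; simp [T]
    rw [this, Finset.card_sdiff_of_subset (by simp)]
    simp
    have : 0 < Fintype.card V := Fintype.card_pos_iff.2 ⟨v0⟩
    omega
  have hWset : {v : V | IsPivot B G v} \ {v0} = (W' : Set V) := by
    ext v
    simp [W', Set.mem_diff]
  have hS1 : (T.image fun v => (v, w1 v)) ⊆ S := by
    intro p hp
    simp only [Finset.mem_image] at hp
    obtain ⟨v, hv, rfl⟩ := hp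
    simp only [T, Finset.mem_filter, Finset.mem_univ, true_and] at hv
    simp only [S, Finset.mem_filter, Finset.mem_univ, true_and]
    exact hw1 v hv
  have hS2 : (W'.image fun v => (v, w2 v)) ⊆ S := by
    intro p hp
    simp only [Finset.mem_image] at hp
    obtain ⟨v, hv, rfl⟩ := hp
    simp only [W', Finset.mem_filter, Finset.mem_univ, true_and] at hv
    simp only [S, Finset.mem_filter, Finset.mem_univ, true_and]
    exact (hw2 v hv.1 hv.2).2
  have hdisj : Disjoint (T.image fun v => (v, w1 v)) (W'.image fun v => (v, w2 v)) := by
    rw [Finset.disjoint_left]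
    intro p hp1 hp2
    simp only [Finset.mem_image] at hp1 hp2
    obtain ⟨v, hv, rfl⟩ := hp1
    obtain ⟨u, hu, huv⟩ := hp2
    simp only [W', Finset.mem_filter, Finset.mem_univ, true_and] at hu
    have h1 : u = v := congrArg Prod.fst huv
    subst h1
    have h2 : w2 u = w1 u := congrArg Prod.snd huv
    exact (hw2 u hu.1 hu.2).1 h2
  have hinj1 : (T.image fun v => (v, w1 v)).card = T.card :=
    Finset.card_image_of_injective _ (fun a b h => congrArg Prod.fst h)
  have hinj2 : (W'.image fun v => (v, w2 v)).card = W'.card :=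
    Finset.card_image_of_injective _ (fun a b h => congrArg Prod.fst h)
  have hsum : T.card + W'.card ≤ S.card := by
    rw [← hinj1, ← hinj2, ← Finset.card_union_of_disjoint hdisj]
    exact Finset.card_le_card (Finset.union_subset hS1 hS2)
  rw [hWset, Set.ncard_coe_finset]
  have := hScard
  push_cast
  omega
end

section
/- Let B be a finite connected graph with a group G acting by graph automorphisms, let W be the set of G-pivot vertices, and let v be any vertex of B. Then |W \ Gv| ≤ β(B) + |Gv| - 1, where Gv denotes the G-orbit of v and β(B) = |E| - |V| + 1. -/
open SimpleGraph

/-- If a group `G` acts on a finite connected graph `B` by graph automorphisms, `W` is the set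
of `G`-pivot vertices and `v` is any vertex, then `|W \ Gv| ≤ β(B) + |Gv| - 1`. -/
theorem stmt_2 {V : Type*} [Fintype V] (B : SimpleGraph V)
    (G : Type*) [Group G] [MulAction G V]
    (hact : ∀ (g : G) (a b : V), B.Adj a b → B.Adj (g • a) (g • b))
    (hconn : B.Connected) (v : V) :
    (({w : V | IsPivot B G w} \ MulAction.orbit G v).ncard : ℤ)
      ≤ ((B.edgeSet.ncard : ℤ) - (Fintype.card V : ℤ) + 1)
          + ((MulAction.orbit G v).ncard : ℤ) - 1 := by
  classical
  set Ov : Set V := MulAction.orbit G v with hOvdef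
  -- the action is by graph automorphisms, in both directions
  have hadj : ∀ (g : G) (a b : V), B.Adj (g • a) (g • b) ↔ B.Adj a b := by
    intro g a b
    constructor
    · intro h
      have := hact g⁻¹ _ _ h
      simpa using this
    · exact hact g a b
  -- distances do not increase under the action
  have hdist : ∀ (g : G) (a b : V), B.dist (g • a) (g • b) ≤ B.dist a b := by
    intro g a b
    obtain ⟨p, hp⟩ := hconn.exists_walk_length_eq_dist a b
    let f : B →g B := ⟨fun x => g • x, fun h => hact g _ _ h⟩
    calc B.dist (g • a) (g • b) ≤ (p.map f).length := SimpleGraph.dist_le _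
      _ = p.length := SimpleGraph.Walk.length_map _ _
      _ = B.dist a b := hp
  -- distance to the orbit of v
  set δ : V → ℕ := fun u => sInf ((fun x => B.dist u x) '' Ov) with hδdef
  have hOvne : Ov.Nonempty := ⟨v, MulAction.mem_orbit_self v⟩
  have hδ_le : ∀ u x, x ∈ Ov → δ u ≤ B.dist u x := by
    intro u x hx
    exact Nat.sInf_le ⟨x, hx, rfl⟩
  have hδ_mem : ∀ u, ∃ x ∈ Ov, B.dist u x = δ u := by
    intro u
    have h := Nat.sInf_mem (hOvne.image (fun x => B.dist u x))
    obtain ⟨x, hx, hxe⟩ := h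
    exact ⟨x, hx, hxe⟩
  have hδ_inv : ∀ (g : G) (u : V), δ (g • u) = δ u := by
    have key : ∀ (g : G) (u : V), δ (g • u) ≤ δ u := by
      intro g u
      obtain ⟨x, hx, hxe⟩ := hδ_mem u
      have hgx : g • x ∈ Ov := by
        obtain ⟨h, rfl⟩ := MulAction.mem_orbit_iff.mp hx
        exact ⟨g * h, by simp [mul_smul]⟩
      calc δ (g • u) ≤ B.dist (g • u) (g • x) := hδ_le _ _ hgx
        _ ≤ B.dist u x := hdist g u x
        _ = δ u := hxe
    intro g u
    refine le_antisymm (key g u) ?_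
    have := key g⁻¹ (g • u)
    simpa using this
  have hδ0 : ∀ u, δ u = 0 ↔ u ∈ Ov := by
    intro u
    constructor
    · intro h
      obtain ⟨x, hx, hxe⟩ := hδ_mem u
      rw [h] at hxe
      rw [hconn.dist_eq_zero_iff] at hxe
      rwa [hxe]
    · intro h
      have := hδ_le u u h
      simpa [SimpleGraph.dist_self] using Nat.le_zero.mp (by simpa [SimpleGraph.dist_self] using this)
  -- every vertex outside the orbit has a "downward" neighbour
  have hdown : ∀ u, u ∉ Ov → ∃ y, B.Adj u y ∧ δ y < δ u := by
    intro u hu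
    obtain ⟨x, hx, hxe⟩ := hδ_mem u
    have hne : δ u ≠ 0 := fun h => hu ((hδ0 u).mp h)
    obtain ⟨p, hp⟩ := hconn.exists_walk_length_eq_dist u x
    cases p with
    | nil =>
        exfalso
        apply hne
        rw [← hxe, SimpleGraph.dist_self]
    | cons h q =>
        rename_i y
        refine ⟨y, h, ?_⟩
        have h1 : δ y ≤ B.dist y x := hδ_le y x hx
        have h2 : B.dist y x ≤ q.length := SimpleGraph.dist_le q
        have h3 : q.length + 1 = δ u := by
          rw [← hxe, ← hp]; simp [SimpleGraph.Walk.length_cons]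
        omega
  -- a pivot vertex outside the orbit has two distinct downward neighbours
  have htwo : ∀ u, u ∉ Ov → IsPivot B G u →
      ∃ a b : V, a ≠ b ∧ (B.Adj u a ∧ δ a < δ u) ∧ (B.Adj u b ∧ δ b < δ u) := by
    intro u hu hpiv
    set St := MulAction.stabilizer G u with hStdef
    set D : Finset V := Finset.univ.filter (fun y => B.Adj u y ∧ δ y < δ u) with hDdef
    have hmemD : ∀ y, y ∈ D ↔ (B.Adj u y ∧ δ y < δ u) := by
      intro y; simp [hDdef]
    have hDne : D.Nonempty := by
      obtain ⟨y, hy1, hy2⟩ := hdown u hu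
      exact ⟨y, (hmemD y).mpr ⟨hy1, hy2⟩⟩
    have horb : ∀ y ∈ D, ∀ z ∈ MulAction.orbit St y, z ∈ D := by
      intro y hy z hz
      obtain ⟨s, rfl⟩ := MulAction.mem_orbit_iff.mp hz
      obtain ⟨hy1, hy2⟩ := (hmemD y).mp hy
      have hsu : (s : G) • u = u := s.2
      have hsy : (s : G) • y = s • y := rfl
      refine (hmemD _).mpr ⟨?_, ?_⟩
      · rw [← hsy, ← hsu]
        exact hact (s : G) u y hy1
      · rw [← hsy, hδ_inv (s : G) y]
        exact hy2
    have hDeven : Even D.card := by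
      rw [Finset.card_eq_sum_card_image (fun y => MulAction.orbit St y) D]
      rw [even_iff_two_dvd]
      apply Finset.dvd_sum
      intro b hb
      obtain ⟨y, hyD, hyb⟩ := Finset.mem_image.mp hb
      have hfiber : D.filter (fun z => MulAction.orbit St z = b) =
          (MulAction.orbit St y).toFinset := by
        ext z
        simp only [Finset.mem_filter, Set.mem_toFinset]
        constructor
        · rintro ⟨hzD, hzb⟩
          rw [← hyb] at hzb
          exact MulAction.orbit_eq_iff.mp hzb
        · intro hz
          refine ⟨horb y hyD z hz, ?_⟩
          rw [← hyb]
          exact MulAction.orbit_eq_iff.mpr hz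
      rw [hfiber]
      rw [← even_iff_two_dvd]
      have : (MulAction.orbit St y).toFinset.card = (MulAction.orbit St y).ncard :=
        (Set.ncard_eq_toFinset_card' _).symm
      rw [this]
      exact hpiv y ((hmemD y).mp hyD).1
    have hcard2 : 1 < D.card := by
      have h1 : D.card ≠ 0 := Finset.card_ne_zero_of_mem hDne.choose_spec
      obtain ⟨k, hk⟩ := hDeven
      omega
    obtain ⟨a, ha, b, hb, hab⟩ := Finset.one_lt_card.mp hcard2
    exact ⟨a, b, hab, (hmemD a).mp ha, (hmemD b).mp hb⟩
  -- choice of downward neighbours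
  have hchoice1 : ∀ u, ∃ y, u ∉ Ov → (B.Adj u y ∧ δ y < δ u) := by
    intro u
    by_cases hu : u ∉ Ov
    · obtain ⟨y, hy⟩ := hdown u hu
      exact ⟨y, fun _ => hy⟩
    · exact ⟨u, fun h => absurd h hu⟩
  choose y₁ hy₁ using hchoice1
  have hchoice2 : ∀ u, ∃ z, (u ∉ Ov ∧ IsPivot B G u) →
      (z ≠ y₁ u ∧ B.Adj u z ∧ δ z < δ u) := by
    intro u
    by_cases hu : u ∉ Ov ∧ IsPivot B G u
    · obtain ⟨a, b, hab, ha, hb⟩ := htwo u hu.1 hu.2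
      by_cases hay : a = y₁ u
      · exact ⟨b, fun _ => ⟨by rw [← hay]; exact hab.symm, hb⟩⟩
      · exact ⟨a, fun _ => ⟨hay, ha⟩⟩
    · exact ⟨u, fun h => absurd h hu⟩
  choose y₂ hy₂ using hchoice2
  -- the two finsets of vertices and the edge assignments
  set A : Finset V := Finset.univ.filter (fun u => u ∉ Ov) with hAdef
  set P : Finset V := Finset.univ.filter (fun u => IsPivot B G u ∧ u ∉ Ov) with hPdef
  have hmemA : ∀ u, u ∈ A ↔ u ∉ Ov := by intro u; simp [hAdef]
  have hmemP : ∀ u, u ∈ P ↔ (IsPivot B G u ∧ u ∉ Ov) := by intro u; simp [hPdef]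
  set f : V → Sym2 V := fun u => s(u, y₁ u) with hfdef
  set f₂ : V → Sym2 V := fun u => s(u, y₂ u) with hf₂def
  have hy₁' : ∀ u ∈ A, B.Adj u (y₁ u) ∧ δ (y₁ u) < δ u := fun u hu => hy₁ u ((hmemA u).mp hu)
  have hy₂' : ∀ u ∈ P, y₂ u ≠ y₁ u ∧ B.Adj u (y₂ u) ∧ δ (y₂ u) < δ u := by
    intro u hu
    have h := (hmemP u).mp hu
    exact hy₂ u ⟨h.2, h.1⟩
  have hPA : P ⊆ A := by
    intro u hu
    exact (hmemA u).mpr ((hmemP u).mp hu).2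
  have hfinj : Set.InjOn f A := by
    intro a ha b hb hab
    rcases Sym2.eq_iff.mp hab with ⟨h1, _⟩ | ⟨h1, h2⟩
    · exact h1
    · exfalso
      have hda := (hy₁' a ha).2
      have hdb := (hy₁' b hb).2
      rw [← h1] at hdb
      rw [h2] at hda
      omega
  have hf₂inj : Set.InjOn f₂ P := by
    intro a ha b hb hab
    rcases Sym2.eq_iff.mp hab with ⟨h1, _⟩ | ⟨h1, h2⟩
    · exact h1
    · exfalso
      have hda := (hy₂' a ha).2.2
      have hdb := (hy₂' b hb).2.2
      rw [← h1] at hdb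
      rw [h2] at hda
      omega
  have hdisj : Disjoint (A.image f) (P.image f₂) := by
    rw [Finset.disjoint_left]
    intro e he1 he2
    obtain ⟨a, ha, hae⟩ := Finset.mem_image.mp he1
    obtain ⟨b, hb, hbe⟩ := Finset.mem_image.mp he2
    have hab : f a = f₂ b := by rw [hae, hbe]
    rcases Sym2.eq_iff.mp hab with ⟨h1, h2⟩ | ⟨h1, h2⟩
    · rw [h1] at h2
      exact (hy₂' b hb).1 h2.symm
    · have hda := (hy₁' a ha).2
      have hdb := (hy₂' b hb).2.2
      rw [h2] at hda
      rw [← h1] at hdb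
      omega
  have hsub : (A.image f) ∪ (P.image f₂) ⊆ B.edgeSet.toFinset := by
    intro e he
    rcases Finset.mem_union.mp he with h | h
    · obtain ⟨a, ha, hae⟩ := Finset.mem_image.mp h
      rw [← hae]
      rw [Set.mem_toFinset]
      exact (hy₁' a ha).1
    · obtain ⟨b, hb, hbe⟩ := Finset.mem_image.mp h
      rw [← hbe]
      rw [Set.mem_toFinset]
      exact (hy₂' b hb).2.1
  have hcard : A.card + P.card ≤ B.edgeSet.ncard := by
    have h1 : (A.image f).card = A.card := Finset.card_image_of_injOn hfinj
    have h2 : (P.image f₂).card = P.card := Finset.card_image_of_injOn hf₂inj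
    calc A.card + P.card = ((A.image f) ∪ (P.image f₂)).card := by
          rw [Finset.card_union_of_disjoint hdisj, h1, h2]
      _ ≤ B.edgeSet.toFinset.card := Finset.card_le_card hsub
      _ = B.edgeSet.ncard := (Set.ncard_eq_toFinset_card' _).symm
  -- cardinality bookkeeping
  have hPW : ({w : V | IsPivot B G w} \ Ov).ncard = P.card := by
    rw [← Set.ncard_coe_finset]
    congr 1
    ext u
    simp only [Set.mem_diff, Set.mem_setOf_eq, Finset.coe_filter, hPdef,
      Finset.mem_univ, true_and, Set.mem_setOf_eq]
  have hAcard : A.card + Ov.ncard = Fintype.card V := by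
    have hA' : A = Finset.univ \ Ov.toFinset := by
      ext u
      simp [hAdef, Set.mem_toFinset]
    rw [hA', Finset.card_sdiff_of_subset (Finset.subset_univ _), ← Set.ncard_eq_toFinset_card' Ov]
    have h1 : Ov.toFinset.card ≤ Finset.univ.card := Finset.card_le_card (Finset.subset_univ _)
    rw [Set.ncard_eq_toFinset_card' Ov] at *
    simp only [Finset.card_univ] at *
    omega
  rw [hPW]
  have hVcard : Fintype.card V = Finset.univ.card := rfl
  omega
end

section
/- Let B be a finite connected graph with a group G acting by graph automorphisms, let W be the nonempty set of G-pivot vertices, and let d = min{|Gv| : v ∈ W}. Then |W| ≤ β(B) + 2d - 1. -/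
open SimpleGraph

section Aux

variable {V : Type*} {B : SimpleGraph V} {G : Type*} [Group G] [MulAction G V]

private lemma dist_smul_eq (hact : ∀ (g : G) (a b : V), B.Adj a b → B.Adj (g • a) (g • b))
    (hconn : B.Connected) (g : G) (a b : V) :
    B.dist (g • a) (g • b) = B.dist a b := by
  have key : ∀ (g : G) (a b : V), B.dist (g • a) (g • b) ≤ B.dist a b := by
    intro g a b
    obtain ⟨p, hp⟩ := hconn.exists_walk_length_eq_dist a b
    have := SimpleGraph.dist_le (p.map (⟨fun a => g • a, fun h => hact g _ _ h⟩ : B →g B))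
    rwa [SimpleGraph.Walk.length_map, hp] at this
  refine le_antisymm (key g a b) ?_
  simpa using key g⁻¹ (g • a) (g • b)

private lemma orbit_stab_smul (g : G) (u w : V) :
    MulAction.orbit (MulAction.stabilizer G (g • u)) (g • w)
      = (g • ·) '' (MulAction.orbit (MulAction.stabilizer G u) w) := by
  ext x
  constructor
  · rintro ⟨⟨h, hh⟩, rfl⟩
    have hh' : h • (g • u) = g • u := hh
    refine ⟨(g⁻¹ * h * g) • w, ⟨⟨g⁻¹ * h * g, ?_⟩, rfl⟩, ?_⟩
    · show (g⁻¹ * h * g) • u = u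
      rw [mul_smul, mul_smul, hh']
      simp
    · show g • (g⁻¹ * h * g) • w = h • (g • w)
      simp [mul_smul]
  · rintro ⟨y, ⟨⟨h, hh⟩, rfl⟩, rfl⟩
    have hh' : h • u = u := hh
    refine ⟨⟨g * h * g⁻¹, ?_⟩, ?_⟩
    · show (g * h * g⁻¹) • (g • u) = g • u
      simp [mul_smul, hh']
    · show (g * h * g⁻¹) • (g • w) = g • h • w
      simp [mul_smul]

private lemma isPivot_smul (hact : ∀ (g : G) (a b : V), B.Adj a b → B.Adj (g • a) (g • b))
    {u : V} (hu : IsPivot B G u) (g : G) : IsPivot B G (g • u) := by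
  intro w hw
  have hw' : B.Adj u (g⁻¹ • w) := by
    have := hact g⁻¹ _ _ hw
    simpa using this
  have horb : MulAction.orbit (MulAction.stabilizer G (g • u)) w
      = (g • ·) '' (MulAction.orbit (MulAction.stabilizer G u) (g⁻¹ • w)) := by
    have := orbit_stab_smul g u (g⁻¹ • w)
    simpa using this
  rw [horb, Set.ncard_image_of_injective _ (MulAction.injective g)]
  exact hu _ hw'

end Aux

/-- If a group `G` acts on a finite connected graph `B` by graph automorphisms, the set `W` of
`G`-pivot vertices is nonempty, and `d = min {|Gv| : v ∈ W}`, then `|W| ≤ β(B) + 2d - 1`. -/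
theorem stmt_3 {V : Type*} [Fintype V] (B : SimpleGraph V)
    (G : Type*) [Group G] [MulAction G V]
    (hact : ∀ (g : G) (a b : V), B.Adj a b → B.Adj (g • a) (g • b))
    (hconn : B.Connected)
    (hW : {v : V | IsPivot B G v}.Nonempty)
    (d : ℕ)
    (hd : IsLeast {n : ℕ | ∃ v : V, IsPivot B G v ∧ n = (MulAction.orbit G v).ncard} d) :
    ({v : V | IsPivot B G v}.ncard : ℤ)
      ≤ ((B.edgeSet.ncard : ℤ) - (Fintype.card V : ℤ) + 1) + 2 * (d : ℤ) - 1 := by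
  classical
  obtain ⟨⟨v, hv, hdv⟩, -⟩ := hd
  -- distance to the orbit of `v`
  set D : V → ℕ := fun u => sInf (Set.range fun g : G => B.dist u (g • v)) with hDdef
  have hne : ∀ u : V, (Set.range fun g : G => B.dist u (g • v)).Nonempty :=
    fun u => ⟨B.dist u ((1 : G) • v), ⟨1, rfl⟩⟩
  have hDmem : ∀ u, ∃ g : G, B.dist u (g • v) = D u := by
    intro u
    have := Nat.sInf_mem (hne u)
    obtain ⟨g, hg⟩ := this
    exact ⟨g, hg⟩
  have hDle : ∀ (u : V) (g : G), D u ≤ B.dist u (g • v) := fun u g => Nat.sInf_le ⟨g, rfl⟩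
  -- invariance of D under the action
  have hDsmul : ∀ (g : G) (u : V), D (g • u) = D u := by
    intro g u
    apply le_antisymm
    · obtain ⟨h, hh⟩ := hDmem u
      calc D (g • u) ≤ B.dist (g • u) ((g * h) • v) := hDle _ _
        _ = B.dist u (h • v) := by rw [mul_smul]; exact dist_smul_eq hact hconn g u (h • v)
        _ = D u := hh
    · obtain ⟨h, hh⟩ := hDmem (g • u)
      calc D u ≤ B.dist u ((g⁻¹ * h) • v) := hDle _ _
        _ = B.dist (g • u) (h • v) := by
            rw [mul_smul, ← dist_smul_eq hact hconn g u (g⁻¹ • h • v)]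
            simp
        _ = D (g • u) := hh
  -- D u = 0 iff u is in the orbit of v
  have hD0 : ∀ u, D u = 0 ↔ u ∈ MulAction.orbit G v := by
    intro u
    constructor
    · intro h0
      obtain ⟨g, hg⟩ := hDmem u
      rw [h0] at hg
      have h1 : u = g • v := (hconn.dist_eq_zero_iff).mp hg
      exact h1 ▸ MulAction.mem_orbit v g
    · intro hu
      obtain ⟨g, hg⟩ := hu
      have : D u ≤ B.dist u (g • v) := hDle u g
      rw [← hg] at this ⊢
      simpa [SimpleGraph.dist_self] using this
  -- every vertex outside the orbit has a neighbour strictly closer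
  have hstep : ∀ u : V, D u ≠ 0 → ∃ w, B.Adj u w ∧ D w < D u := by
    intro u h0
    obtain ⟨g, hg⟩ := hDmem u
    obtain ⟨p, hp⟩ := hconn.exists_walk_length_eq_dist u (g • v)
    cases p with
    | nil => rw [SimpleGraph.Walk.length_nil] at hp; omega
    | @cons _ w _ h q =>
      refine ⟨w, h, ?_⟩
      have h1 : D w ≤ q.length := le_trans (hDle w g) (SimpleGraph.dist_le q)
      rw [SimpleGraph.Walk.length_cons] at hp
      omega
  -- every pivot outside the orbit has two neighbours strictly closer
  have hstep2 : ∀ u : V, IsPivot B G u → D u ≠ 0 →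
      ∃ w w', w ≠ w' ∧ (B.Adj u w ∧ D w < D u) ∧ (B.Adj u w' ∧ D w' < D u) := by
    intro u hu h0
    obtain ⟨w, hadj, hlt⟩ := hstep u h0
    have heven := hu w hadj
    have hwmem : w ∈ MulAction.orbit (MulAction.stabilizer G u) w := MulAction.mem_orbit_self w
    have hfin : (MulAction.orbit (MulAction.stabilizer G u) w).Finite := Set.toFinite _
    obtain ⟨w', hw', hne'⟩ : ∃ w' ∈ MulAction.orbit (MulAction.stabilizer G u) w, w' ≠ w := by
      by_contra hcon
      push_neg at hcon
      have hsingle : MulAction.orbit (MulAction.stabilizer G u) w = {w} :=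
        Set.eq_singleton_iff_unique_mem.mpr ⟨hwmem, hcon⟩
      rw [hsingle, Set.ncard_singleton] at heven
      exact (Nat.not_even_iff.mpr rfl) heven
    obtain ⟨⟨h, hstab⟩, rfl⟩ := hw'
    have hstab' : h • u = u := hstab
    refine ⟨w, h • w, fun e => hne' e.symm, ⟨hadj, hlt⟩, ⟨?_, ?_⟩⟩
    · have := hact h u w hadj
      rwa [hstab'] at this
    · rw [hDsmul h w]; exact hlt
  -- the finsets
  let Wf : Finset V := Finset.univ.filter (fun u => IsPivot B G u)
  let Of : Finset V := Finset.univ.filter (fun u => D u = 0)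
  have hOW : Of ⊆ Wf := by
    intro u hu
    simp only [Of, Finset.mem_filter, Finset.mem_univ, true_and] at hu
    obtain ⟨g, hg⟩ := (hD0 u).mp hu
    simp only [Wf, Finset.mem_filter, Finset.mem_univ, true_and]
    exact hg ▸ isPivot_smul hact hv g
  -- the downward-edge pairs
  let s : Finset (V × V) := Finset.univ.filter (fun p => B.Adj p.1 p.2 ∧ D p.2 < D p.1)
  -- upper bound: s injects into the edge set
  have hs_le : s.card ≤ B.edgeFinset.card := by
    apply Finset.card_le_card_of_injOn (fun p => s(p.1, p.2))
    · intro p hp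
      simp only [s, Finset.mem_coe, Finset.mem_filter, Finset.mem_univ, true_and] at hp
      rw [Finset.mem_coe, SimpleGraph.mem_edgeFinset, SimpleGraph.mem_edgeSet]
      exact hp.1
    · intro p hp q hq hpq
      simp only [s, Finset.mem_coe, Finset.mem_filter, Finset.mem_univ, true_and] at hp hq
      rw [Sym2.eq_iff] at hpq
      rcases hpq with ⟨h1, h2⟩ | ⟨h1, h2⟩
      · exact Prod.ext h1 h2
      · exfalso
        have h3 := hp.2
        rw [h1, h2] at h3
        exact lt_asymm h3 hq.2
  -- lower bound: fiberwise count
  have hs_eq : s.card = ∑ u : V, (Finset.univ.filter (fun w => B.Adj u w ∧ D w < D u)).card := by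
    rw [Finset.card_eq_sum_card_fiberwise (f := Prod.fst) (t := Finset.univ)
      (fun p _ => Finset.mem_univ _)]
    refine Finset.sum_congr rfl (fun u _ => ?_)
    apply Finset.card_bij (fun p _ => p.2)
    · intro p hp
      simp only [s, Finset.mem_filter, Finset.mem_univ, true_and] at hp
      obtain ⟨⟨h1, h2⟩, h3⟩ := hp
      simp only [Finset.mem_filter, Finset.mem_univ, true_and]
      rw [← h3]
      exact ⟨h1, h2⟩
    · intro p hp q hq hpq
      simp only [s, Finset.mem_filter, Finset.mem_univ, true_and] at hp hq
      exact Prod.ext (hp.2.trans hq.2.symm) hpq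
    · intro w hw
      simp only [Finset.mem_filter, Finset.mem_univ, true_and] at hw
      refine ⟨(u, w), ?_, rfl⟩
      simp only [s, Finset.mem_filter, Finset.mem_univ, true_and]
      exact ⟨hw, trivial⟩
  -- pointwise lower bounds
  have hpt : ∀ u : V, (if u ∈ Of then 0 else if u ∈ Wf then 2 else 1)
      ≤ (Finset.univ.filter (fun w => B.Adj u w ∧ D w < D u)).card := by
    intro u
    by_cases h0 : u ∈ Of
    · simp [h0]
    · have hD0' : D u ≠ 0 := by
        simpa [Of, Finset.mem_filter] using h0
      by_cases hp : u ∈ Wf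
      · obtain ⟨w, w', hne', hw, hw'⟩ := hstep2 u (by simpa [Wf, Finset.mem_filter] using hp) hD0'
        simp only [h0, hp, if_false, if_true]
        have hsub : ({w, w'} : Finset V) ⊆ Finset.univ.filter (fun x => B.Adj u x ∧ D x < D u) := by
          intro x hx
          simp only [Finset.mem_insert, Finset.mem_singleton] at hx
          rcases hx with rfl | rfl <;>
            simp only [Finset.mem_filter, Finset.mem_univ, true_and]
          · exact hw
          · exact hw'
        calc (2 : ℕ) = ({w, w'} : Finset V).card := (Finset.card_pair hne').symm
          _ ≤ _ := Finset.card_le_card hsub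
      · obtain ⟨w, hw1, hw2⟩ := hstep u hD0'
        simp only [h0, hp, if_false]
        refine Finset.card_pos.mpr ⟨w, ?_⟩
        simp only [Finset.mem_filter, Finset.mem_univ, true_and]
        exact ⟨hw1, hw2⟩
  have hsum_le : ∑ u : V, (if u ∈ Of then 0 else if u ∈ Wf then 2 else 1) ≤ s.card := by
    rw [hs_eq]
    exact Finset.sum_le_sum (fun u _ => hpt u)
  -- compute the left sum
  have hsum_eq : ∑ u : V, (if u ∈ Of then 0 else if u ∈ Wf then 2 else 1)
      = 2 * (Wf.card - Of.card) + (Fintype.card V - Wf.card) := by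
    rw [← Finset.sum_sdiff (Finset.subset_univ Wf), ← Finset.sum_sdiff hOW]
    have e1 : ∑ u ∈ Finset.univ \ Wf, (if u ∈ Of then 0 else if u ∈ Wf then 2 else 1)
        = (Finset.univ \ Wf).card := by
      rw [Finset.card_eq_sum_ones]
      refine Finset.sum_congr rfl (fun u hu => ?_)
      rw [Finset.mem_sdiff] at hu
      have h1 : u ∉ Of := fun h => hu.2 (hOW h)
      simp [h1, hu.2]
    have e2 : ∑ u ∈ Wf \ Of, (if u ∈ Of then 0 else if u ∈ Wf then 2 else 1)
        = 2 * (Wf \ Of).card := by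
      rw [Finset.card_eq_sum_ones, Finset.mul_sum]
      refine Finset.sum_congr rfl (fun u hu => ?_)
      rw [Finset.mem_sdiff] at hu
      simp [hu.1, hu.2]
    have e3 : ∑ u ∈ Of, (if u ∈ Of then 0 else if u ∈ Wf then 2 else 1) = 0 := by
      refine Finset.sum_eq_zero (fun u hu => ?_)
      simp [hu]
    rw [e1, e2, e3, Finset.card_sdiff_of_subset hOW, Finset.card_sdiff_of_subset (Finset.subset_univ Wf),
      Finset.card_univ]
    omega
  -- identify the cardinalities
  have hWcard : {v : V | IsPivot B G v}.ncard = Wf.card := by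
    rw [Set.ncard_eq_toFinset_card']
    congr 1
    ext u
    simp [Wf, Set.mem_toFinset]
  have hOcard : d = Of.card := by
    rw [hdv, Set.ncard_eq_toFinset_card']
    congr 1
    ext u
    simp [Of, Set.mem_toFinset, hD0]
  have hEcard : B.edgeSet.ncard = B.edgeFinset.card := by
    rw [Set.ncard_eq_toFinset_card']
    congr 1
  have hWV : Wf.card ≤ Fintype.card V := by
    rw [← Finset.card_univ]
    exact Finset.card_le_card (Finset.subset_univ Wf)
  have hOWcard : Of.card ≤ Wf.card := Finset.card_le_card hOW
  rw [hWcard, hOcard, hEcard]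
  have hfinal : 2 * (Wf.card - Of.card) + (Fintype.card V - Wf.card) ≤ B.edgeFinset.card :=
    hsum_eq ▸ (hsum_le.trans hs_le)
  omega
end

section
/- Let B be a finite connected graph with a group G acting by graph automorphisms, let W be the nonempty set of G-pivot vertices, and let d = min{|Gv| : v ∈ W}. Then the number of G-orbits contained in W is at most (β(B) - 1)/d + 2. -/
open SimpleGraph

section PivotAux

open MulAction

variable {V : Type*} {G : Type*} [Group G] [MulAction G V]

/-- The action of a group element on unordered pairs. -/
def emap (g : G) : Sym2 V → Sym2 V := Sym2.map (g • ·)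

lemma emap_pair (g : G) (a b : V) : emap g s(a, b) = s(g • a, g • b) :=
  Sym2.map_pair_eq _ a b

lemma emap_one (x : Sym2 V) : emap (1 : G) x = x := by
  induction x using Sym2.ind with
  | _ a b => simp [emap_pair]

lemma emap_emap (g h : G) (x : Sym2 V) : emap g (emap h x) = emap (g * h) x := by
  induction x using Sym2.ind with
  | _ a b => simp [emap_pair, mul_smul]

/-- The orbit of an unordered pair under the induced action. -/
def orbitE (G : Type*) [Group G] [MulAction G V] (e : Sym2 V) : Set (Sym2 V) :=
  Set.range fun g : G => emap g e

lemma self_mem_orbitE (e : Sym2 V) : e ∈ orbitE G e := ⟨1, emap_one e⟩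

lemma emap_mem_orbitE {e x : Sym2 V} (h : x ∈ orbitE G e) (g : G) : emap g x ∈ orbitE G e := by
  obtain ⟨h', rfl⟩ := h
  exact ⟨g * h', (emap_emap _ _ _).symm⟩

lemma orbitE_eq_of_mem {e x : Sym2 V} (h : x ∈ orbitE G e) : orbitE G x = orbitE G e := by
  obtain ⟨g, rfl⟩ := h
  ext y
  constructor
  · rintro ⟨h', rfl⟩
    exact ⟨h' * g, (emap_emap _ _ _).symm⟩
  · rintro ⟨h', rfl⟩
    refine ⟨h' * g⁻¹, ?_⟩
    show emap (h' * g⁻¹) (emap g e) = emap h' e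
    rw [emap_emap, inv_mul_cancel_right]

lemma orbit_eq_of_mem' {a b : V} (h : a ∈ orbit G b) : orbit G a = orbit G b :=
  MulAction.orbit_eq_iff.mpr h

/-- Pivotness is invariant under the action, provided the action is by graph automorphisms. -/
lemma IsPivot.smul_mem {B : SimpleGraph V}
    (hact : ∀ (g : G) (a b : V), B.Adj a b → B.Adj (g • a) (g • b))
    {v : V} (hv : IsPivot B G v) (g : G) : IsPivot B G (g • v) := by
  intro w hw
  have hadj : B.Adj v (g⁻¹ • w) := by
    have := hact g⁻¹ (g • v) w hw
    simpa using this
  have key : orbit (stabilizer G (g • v)) w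
      = (g • ·) '' orbit (stabilizer G v) (g⁻¹ • w) := by
    ext x
    constructor
    · rintro ⟨⟨h, hh⟩, rfl⟩
      have hh' : h • (g • v) = g • v := hh
      refine ⟨(g⁻¹ * h * g) • (g⁻¹ • w), MulAction.mem_orbit_iff.mpr ⟨⟨g⁻¹ * h * g, ?_⟩, rfl⟩, ?_⟩
      · show (g⁻¹ * h * g) • v = v
        calc (g⁻¹ * h * g) • v = g⁻¹ • h • g • v := by rw [mul_smul, mul_smul]
          _ = g⁻¹ • g • v := by rw [hh']
          _ = v := inv_smul_smul g v
      · show g • (g⁻¹ * h * g) • (g⁻¹ • w) = h • w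
        calc g • (g⁻¹ * h * g) • g⁻¹ • w = g • g⁻¹ • h • g • g⁻¹ • w := by
              rw [mul_smul, mul_smul]
          _ = h • w := by rw [smul_inv_smul, smul_inv_smul]
    · rintro ⟨y, hy, rfl⟩
      obtain ⟨⟨k, hk⟩, rfl⟩ := MulAction.mem_orbit_iff.mp hy
      have hk' : k • v = v := hk
      refine MulAction.mem_orbit_iff.mpr ⟨⟨g * k * g⁻¹, ?_⟩, ?_⟩
      · show (g * k * g⁻¹) • (g • v) = g • v
        calc (g * k * g⁻¹) • (g • v) = g • k • g⁻¹ • g • v := by rw [mul_smul, mul_smul]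
          _ = g • k • v := by rw [inv_smul_smul]
          _ = g • v := by rw [hk']
      · show (g * k * g⁻¹) • w = g • k • g⁻¹ • w
        rw [mul_smul, mul_smul]
  rw [key, Set.ncard_image_of_injective _ (MulAction.injective g)]
  exact hv _ hadj

variable [Finite V]

/-- An edge orbit meeting a vertex orbit `A ≠` (orbit of other endpoint) has size at least
`|A|`. -/
lemma ncard_orbit_le_ncard_orbitE {a b : V} (hne : orbit G b ≠ orbit G a) :
    (orbit G a).ncard ≤ (orbitE G s(a, b)).ncard := by
  have hex : ∀ x : V, ∃ g : G, x ∈ orbit G a → g • a = x := by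
    intro x
    by_cases hx : x ∈ orbit G a
    · obtain ⟨g, hg⟩ := MulAction.mem_orbit_iff.mp hx
      exact ⟨g, fun _ => hg⟩
    · exact ⟨1, fun h => absurd h hx⟩
  choose f hf using hex
  have hinj : Set.InjOn (fun x => emap (f x) s(a, b)) (orbit G a) := by
    intro x hx y hy hxy
    simp only [emap_pair, hf x hx, hf y hy] at hxy
    rcases Sym2.eq_iff.mp hxy with ⟨h1, _⟩ | ⟨h1, _⟩
    · exact h1
    · exfalso
      have hxb : x ∈ orbit G b := MulAction.mem_orbit_iff.mpr ⟨f y, h1.symm⟩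
      exact hne ((orbit_eq_of_mem' hxb).symm.trans (orbit_eq_of_mem' hx))
  calc (orbit G a).ncard = ((fun x => emap (f x) s(a, b)) '' orbit G a).ncard :=
        (Set.ncard_image_of_injOn hinj).symm
    _ ≤ (orbitE G s(a, b)).ncard := by
        refine Set.ncard_le_ncard ?_ (Set.toFinite _)
        rintro _ ⟨x, _, rfl⟩
        exact ⟨f x, rfl⟩

/-- If moreover `a` is a pivot vertex, the edge orbit has size at least `2 |A|`. -/
lemma two_mul_ncard_orbit_le_ncard_orbitE {B : SimpleGraph V} {a b : V}
    (hab : B.Adj a b) (hp : IsPivot B G a) (hne : orbit G b ≠ orbit G a) :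
    2 * (orbit G a).ncard ≤ (orbitE G s(a, b)).ncard := by
  -- find a second element in the stabilizer orbit of `b`
  have heven := hp b hab
  have hbmem : b ∈ orbit (stabilizer G a) b := MulAction.mem_orbit_self b
  have h1 : 1 < (orbit (stabilizer G a) b).ncard :=
    Set.one_lt_ncard_of_nonempty_of_even (Set.toFinite _) ⟨b, hbmem⟩ heven
  obtain ⟨x, hx, y, hy, hxy⟩ := (Set.one_lt_ncard (Set.toFinite _)).mp h1
  obtain ⟨b₂, hb₂mem, hb₂ne⟩ : ∃ c ∈ orbit (stabilizer G a) b, c ≠ b := by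
    by_cases hxb : x = b
    · exact ⟨y, hy, fun h => hxy (hxb.trans h.symm)⟩
    · exact ⟨x, hx, hxb⟩
  obtain ⟨⟨k, hk⟩, hkb⟩ := MulAction.mem_orbit_iff.mp hb₂mem
  have hk' : k • a = a := hk
  have hkb' : k • b = b₂ := hkb
  have hb₂orb : b₂ ∈ orbit G b := MulAction.mem_orbit_iff.mpr ⟨k, hkb'⟩
  have hpair : s(a, b₂) ∈ orbitE G s(a, b) :=
    ⟨k, by show emap k s(a, b) = s(a, b₂); rw [emap_pair, hk', hkb']⟩
  have hne₂ : orbit G b₂ ≠ orbit G a := by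
    rw [orbit_eq_of_mem' hb₂orb]; exact hne
  -- choice of group elements realizing the orbit of `a`
  have hex : ∀ x : V, ∃ g : G, x ∈ orbit G a → g • a = x := by
    intro x
    by_cases hx : x ∈ orbit G a
    · obtain ⟨g, hg⟩ := MulAction.mem_orbit_iff.mp hx
      exact ⟨g, fun _ => hg⟩
    · exact ⟨1, fun h => absurd h hx⟩
  choose f hf using hex
  have hinj : ∀ c : V, orbit G c = orbit G b →
      Set.InjOn (fun x => emap (f x) s(a, c)) (orbit G a) := by
    intro c hc x hx y hy hxy
    simp only [emap_pair, hf x hx, hf y hy] at hxy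
    rcases Sym2.eq_iff.mp hxy with ⟨h1, _⟩ | ⟨h1, _⟩
    · exact h1
    · exfalso
      have hxc : x ∈ orbit G c := MulAction.mem_orbit_iff.mpr ⟨f y, h1.symm⟩
      rw [hc] at hxc
      exact hne ((orbit_eq_of_mem' hxc).symm.trans (orbit_eq_of_mem' hx))
  have hdisj : Disjoint ((fun x => emap (f x) s(a, b)) '' orbit G a)
      ((fun x => emap (f x) s(a, b₂)) '' orbit G a) := by
    rw [Set.disjoint_left]
    rintro _ ⟨x, hx, rfl⟩ ⟨y, hy, hxy⟩
    simp only [emap_pair, hf x hx, hf y hy] at hxy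
    rcases Sym2.eq_iff.mp hxy with ⟨h1, h2⟩ | ⟨h1, h2⟩
    · subst h1
      exact hb₂ne (by rwa [smul_left_cancel_iff] at h2)
    · have hxb : x ∈ orbit G b := by
        rw [← orbit_eq_of_mem' hb₂orb]
        exact MulAction.mem_orbit_iff.mpr ⟨f y, h2⟩
      exact hne ((orbit_eq_of_mem' hxb).symm.trans (orbit_eq_of_mem' hx))
  have hsub : ((fun x => emap (f x) s(a, b)) '' orbit G a)
      ∪ ((fun x => emap (f x) s(a, b₂)) '' orbit G a) ⊆ orbitE G s(a, b) := by
    rintro _ (⟨x, _, rfl⟩ | ⟨x, _, rfl⟩)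
    · exact ⟨f x, rfl⟩
    · exact emap_mem_orbitE hpair (f x)
  calc 2 * (orbit G a).ncard
      = ((fun x => emap (f x) s(a, b)) '' orbit G a).ncard
        + ((fun x => emap (f x) s(a, b₂)) '' orbit G a).ncard := by
        rw [Set.ncard_image_of_injOn (hinj b rfl),
          Set.ncard_image_of_injOn (hinj b₂ (orbit_eq_of_mem' hb₂orb))]
        ring
    _ = (((fun x => emap (f x) s(a, b)) '' orbit G a)
        ∪ ((fun x => emap (f x) s(a, b₂)) '' orbit G a)).ncard :=
        (Set.ncard_union_eq hdisj (Set.toFinite _) (Set.toFinite _)).symm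
    _ ≤ (orbitE G s(a, b)).ncard := Set.ncard_le_ncard hsub (Set.toFinite _)

end PivotAux

/-- If a group `G` acts on a finite connected graph `B` by graph automorphisms, the set `W` of
`G`-pivot vertices is nonempty, and `d = min {|Gv| : v ∈ W}`, then the number `N` of `G`-orbits
contained in `W` satisfies `d * N ≤ (β(B) - 1) + 2 * d`. -/
theorem stmt_4 {V : Type*} [Fintype V] (B : SimpleGraph V)
    (G : Type*) [Group G] [MulAction G V]
    (hact : ∀ (g : G) (a b : V), B.Adj a b → B.Adj (g • a) (g • b))
    (hconn : B.Connected)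
    (hW : {v : V | IsPivot B G v}.Nonempty)
    (d : ℕ)
    (hd : IsLeast {n : ℕ | ∃ v : V, IsPivot B G v ∧ n = (MulAction.orbit G v).ncard} d) :
    (d : ℤ) * ({s : Set V | ∃ v : V, IsPivot B G v ∧ s = MulAction.orbit G v}.ncard : ℤ)
      ≤ (((B.edgeSet.ncard : ℤ) - (Fintype.card V : ℤ) + 1) - 1) + 2 * (d : ℤ) := by
  classical
  obtain ⟨r₀, hr₀p, hd₀⟩ := hd.1
  set Pset : Set (Set V) := {s : Set V | ∃ v : V, IsPivot B G v ∧ s = MulAction.orbit G v}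
    with hPsetdef
  set R : Set V := MulAction.orbit G r₀ with hRdef
  -- the finset of all vertex orbits
  set OF : Finset (Set V) := Finset.image (fun v : V => MulAction.orbit G v) Finset.univ
    with hOFdef
  have horbA : ∀ A ∈ OF, ∀ x ∈ A, MulAction.orbit G x = A := by
    intro A hA x hx
    obtain ⟨v, -, hv⟩ := Finset.mem_image.mp hA
    rw [← hv] at hx ⊢
    exact orbit_eq_of_mem' hx
  have hROF : R ∈ OF := Finset.mem_image.mpr ⟨r₀, Finset.mem_univ _, rfl⟩
  set D : Finset (Set V) := OF.erase R with hDdef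
  -- the distance-to-root function on orbits
  set m : Set V → ℕ := fun A => sInf ((fun x => B.dist x r₀) '' A) with hmdef
  have hm_le : ∀ {A : Set V} {x : V}, x ∈ A → m A ≤ B.dist x r₀ := by
    intro A x hx
    exact Nat.sInf_le ⟨x, hx, rfl⟩
  -- choose, for each orbit `A ≠ R`, a vertex of `A` closest to `r₀` together with a
  -- neighbour strictly closer to `r₀`
  have hex : ∀ A : Set V, ∃ p : V × V, A ∈ D →
      p.1 ∈ A ∧ B.Adj p.1 p.2 ∧ B.dist p.2 r₀ < m A := by
    intro A
    by_cases hA : A ∈ D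
    · have hAO : A ∈ OF := Finset.mem_of_mem_erase hA
      have hAne : A ≠ R := Finset.ne_of_mem_erase hA
      obtain ⟨v, -, hv⟩ := Finset.mem_image.mp hAO
      have hvA : v ∈ A := by rw [← hv]; exact MulAction.mem_orbit_self v
      have hne : ((fun x => B.dist x r₀) '' A).Nonempty := ⟨_, v, hvA, rfl⟩
      obtain ⟨a, haA, hadist⟩ := Nat.sInf_mem hne
      have hadist' : B.dist a r₀ = m A := hadist
      clear hadist
      have hm1 : m A ≠ 0 := by
        intro h0
        have hd0 : B.dist a r₀ = 0 := by rw [hadist']; exact h0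
        have har : a = r₀ := (hconn.dist_eq_zero_iff).mp hd0
        apply hAne
        rw [← horbA A hAO a haA, har, hRdef]
      obtain ⟨p, hp⟩ := hconn.exists_walk_length_eq_dist a r₀
      cases p with
      | nil =>
        exact absurd (by rw [← hadist']; exact SimpleGraph.dist_self) hm1
      | @cons _ c _ h q =>
        refine ⟨(a, c), fun _ => ⟨haA, h, ?_⟩⟩
        have hq : B.dist c r₀ ≤ q.length := SimpleGraph.dist_le q
        have hlen : q.length + 1 = m A := by
          rw [SimpleGraph.Walk.length_cons] at hp
          rw [← hadist']
          exact hp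
        show B.dist c r₀ < m A
        omega
    · exact ⟨(r₀, r₀), fun h => absurd h hA⟩
  choose pf hpf using hex
  set aF : Set V → V := fun A => (pf A).1 with haFdef
  set bF : Set V → V := fun A => (pf A).2 with hbFdef
  set φ : Set V → Set (Sym2 V) := fun A => orbitE G s(aF A, bF A) with hφdef
  have haA : ∀ A ∈ D, aF A ∈ A := fun A hA => ((hpf A) hA).1
  have hadj : ∀ A ∈ D, B.Adj (aF A) (bF A) := fun A hA => ((hpf A) hA).2.1
  have hbdist : ∀ A ∈ D, B.dist (bF A) r₀ < m A := fun A hA => ((hpf A) hA).2.2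
  have horbaF : ∀ A ∈ D, MulAction.orbit G (aF A) = A := fun A hA =>
    horbA A (Finset.mem_of_mem_erase hA) _ (haA A hA)
  have hbne : ∀ A ∈ D, MulAction.orbit G (bF A) ≠ A := by
    intro A hA h
    have hmem : bF A ∈ A := by
      have := MulAction.mem_orbit_self (M := G) (bF A); rwa [h] at this
    exact absurd (hbdist A hA) (not_lt.mpr (hm_le hmem))
  -- injectivity of the assignment orbit ↦ edge orbit
  have hφinj : ∀ A ∈ D, ∀ A' ∈ D, φ A = φ A' → A = A' := by
    intro A hA A' hA' heq
    have h1 : s(aF A, bF A) ∈ φ A' := heq ▸ self_mem_orbitE _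
    obtain ⟨g, hg⟩ := h1
    have hg' : emap g s(aF A', bF A') = s(aF A, bF A) := hg
    clear hg
    rename' hg' => hg
    rw [emap_pair] at hg
    rcases Sym2.eq_iff.mp hg with ⟨h1, h2⟩ | ⟨h1, h2⟩
    · have : aF A ∈ MulAction.orbit G (aF A') := MulAction.mem_orbit_iff.mpr ⟨g, h1⟩
      rw [← horbaF A hA, ← horbaF A' hA']
      exact orbit_eq_of_mem' this
    · exfalso
      have hx : aF A ∈ MulAction.orbit G (bF A') := MulAction.mem_orbit_iff.mpr ⟨g, h2⟩
      have hbA' : bF A' ∈ A := by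
        rw [← horbaF A hA, orbit_eq_of_mem' hx]
        exact MulAction.mem_orbit_self _
      have hy : bF A ∈ MulAction.orbit G (aF A') := MulAction.mem_orbit_iff.mpr ⟨g, h1⟩
      have hbA : bF A ∈ A' := by
        rw [← horbaF A' hA', ← orbit_eq_of_mem' hy]
        exact MulAction.mem_orbit_self _
      have l1 : m A ≤ B.dist (bF A') r₀ := hm_le hbA'
      have l2 : m A' ≤ B.dist (bF A) r₀ := hm_le hbA
      have l3 := hbdist A hA
      have l4 := hbdist A' hA'
      omega
  -- lower bound on the size of each chosen edge orbit
  have hφge : ∀ A ∈ D, A.ncard + (if A ∈ Pset then d else 0) ≤ (φ A).ncard := by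
    intro A hA
    have hne : MulAction.orbit G (bF A) ≠ MulAction.orbit G (aF A) := by
      rw [horbaF A hA]; exact hbne A hA
    by_cases hp : A ∈ Pset
    · obtain ⟨v, hvp, hveq⟩ := hp
      have hpa : IsPivot B G (aF A) := by
        have hmm : aF A ∈ MulAction.orbit G v :=
          (show A ⊆ MulAction.orbit G v from hveq.le) (haA A hA)
        obtain ⟨g, hg⟩ := MulAction.mem_orbit_iff.mp hmm
        rw [← hg]
        exact hvp.smul_mem hact g
      have h2 := two_mul_ncard_orbit_le_ncard_orbitE (hadj A hA) hpa hne
      rw [horbaF A hA] at h2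
      have hd2 : d ≤ A.ncard := by
        have : A.ncard ∈ {n : ℕ | ∃ v : V, IsPivot B G v ∧ n = (MulAction.orbit G v).ncard} :=
          ⟨v, hvp, by rw [hveq]⟩
        exact hd.2 this
      simp only [if_pos (show A ∈ Pset from ⟨v, hvp, hveq⟩)]
      have hφA : (φ A).ncard = (orbitE G s(aF A, bF A)).ncard := rfl
      omega
    · have h2 := ncard_orbit_le_ncard_orbitE hne
      rw [horbaF A hA] at h2
      simp only [if_neg hp, add_zero]
      exact h2
  -- the vertex count
  have hVsum : Fintype.card V = ∑ A ∈ OF, A.ncard := by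
    rw [← Finset.card_univ,
      Finset.card_eq_sum_card_fiberwise
        (fun x _ => Finset.mem_image_of_mem (fun v : V => MulAction.orbit G v) (Finset.mem_univ x))]
    refine Finset.sum_congr rfl fun A hA => ?_
    rw [Set.ncard_eq_toFinset_card A (Set.toFinite A)]
    congr 1
    ext x
    simp only [Finset.mem_filter, Finset.mem_univ, true_and, Set.Finite.mem_toFinset]
    constructor
    · intro h; rw [← h]; exact MulAction.mem_orbit_self x
    · intro h; exact horbA A hA x h
  -- the edge count
  have hEinv : ∀ {e : Sym2 V}, e ∈ B.edgeSet → ∀ g : G, emap g e ∈ B.edgeSet := by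
    intro e he g
    induction e with
    | _ u v =>
      rw [emap_pair, SimpleGraph.mem_edgeSet]
      exact hact g u v ((SimpleGraph.mem_edgeSet B).mp he)
  set EFin : Finset (Sym2 V) := (Set.toFinite B.edgeSet).toFinset with hEFdef
  set ℰF : Finset (Set (Sym2 V)) := EFin.image (orbitE G) with hℰFdef
  have hEsum : B.edgeSet.ncard = ∑ T ∈ ℰF, T.ncard := by
    rw [Set.ncard_eq_toFinset_card B.edgeSet (Set.toFinite _),
      Finset.card_eq_sum_card_fiberwise (fun x hx => Finset.mem_image_of_mem (orbitE G) hx)]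
    refine Finset.sum_congr rfl fun T hT => ?_
    obtain ⟨e₀, he₀, he₀T⟩ := Finset.mem_image.mp hT
    rw [Set.ncard_eq_toFinset_card T (Set.toFinite T)]
    congr 1
    ext x
    simp only [Finset.mem_filter, Set.Finite.mem_toFinset]
    constructor
    · rintro ⟨-, h⟩
      rw [← h]; exact self_mem_orbitE x
    · intro hx
      have hx' : x ∈ orbitE G e₀ := he₀T ▸ hx
      obtain ⟨g, rfl⟩ := hx'
      have he₀' : e₀ ∈ B.edgeSet := (Set.Finite.mem_toFinset _).mp he₀
      refine ⟨?_, ?_⟩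
      · exact hEinv he₀' g
      · rw [← he₀T]
        exact orbitE_eq_of_mem (emap_mem_orbitE (self_mem_orbitE e₀) g)
  -- the chain of inequalities
  have hsubℰ : D.image φ ⊆ ℰF := by
    intro T hT
    obtain ⟨A, hA, hAT⟩ := Finset.mem_image.mp hT
    refine Finset.mem_image.mpr ⟨s(aF A, bF A), ?_, hAT⟩
    exact (Set.Finite.mem_toFinset _).mpr ((SimpleGraph.mem_edgeSet B).mpr (hadj A hA))
  have hchain : ∑ A ∈ D, (A.ncard + if A ∈ Pset then d else 0) ≤ B.edgeSet.ncard := by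
    calc ∑ A ∈ D, (A.ncard + if A ∈ Pset then d else 0)
        ≤ ∑ A ∈ D, (φ A).ncard := Finset.sum_le_sum hφge
      _ = ∑ T ∈ D.image φ, T.ncard := (Finset.sum_image hφinj).symm
      _ ≤ ∑ T ∈ ℰF, T.ncard := Finset.sum_le_sum_of_subset hsubℰ
      _ = B.edgeSet.ncard := hEsum.symm
  -- split the sum
  have hsplit : ∑ A ∈ D, (A.ncard + if A ∈ Pset then d else 0)
      = (∑ A ∈ D, A.ncard) + ∑ A ∈ D, (if A ∈ Pset then d else 0) :=
    Finset.sum_add_distrib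
  have hS1 : (∑ A ∈ D, A.ncard) + d = ∑ A ∈ OF, A.ncard := by
    have := Finset.sum_erase_add OF (fun A : Set V => A.ncard) hROF
    rw [← this, hd₀]
  set PFin : Finset (Set V) := (Set.toFinite Pset).toFinset with hPFdef
  have hRP : R ∈ PFin := by
    rw [Set.Finite.mem_toFinset]
    exact ⟨r₀, hr₀p, rfl⟩
  have hfil : D.filter (· ∈ Pset) = PFin.erase R := by
    ext A
    constructor
    · intro hA
      have h1 := Finset.mem_filter.mp hA
      exact Finset.mem_erase.mpr
        ⟨Finset.ne_of_mem_erase h1.1, (Set.Finite.mem_toFinset _).mpr h1.2⟩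
    · intro hA
      have h1 := Finset.mem_erase.mp hA
      have hP : A ∈ Pset := (Set.Finite.mem_toFinset _).mp h1.2
      refine Finset.mem_filter.mpr ⟨Finset.mem_erase.mpr ⟨h1.1, ?_⟩, hP⟩
      obtain ⟨v, -, hv⟩ := hP
      exact Finset.mem_image.mpr ⟨v, Finset.mem_univ _, hv.symm⟩
  have hite : ∑ A ∈ D, (if A ∈ Pset then d else 0) = (PFin.erase R).card * d := by
    rw [← Finset.sum_filter, hfil, Finset.sum_const, smul_eq_mul]
  have hk : (PFin.erase R).card + 1 = PFin.card := Finset.card_erase_add_one hRP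
  have hPN : PFin.card = Pset.ncard := (Set.ncard_eq_toFinset_card Pset (Set.toFinite _)).symm
  -- final arithmetic
  have hNat : Fintype.card V + d * Pset.ncard ≤ B.edgeSet.ncard + 2 * d := by
    have e1 : d * Pset.ncard = (PFin.erase R).card * d + d := by
      rw [← hPN, ← hk]; ring
    rw [hsplit, hite] at hchain
    have e2 : Fintype.card V = (∑ A ∈ D, A.ncard) + d := by rw [hS1, ← hVsum]
    linarith
  have hZ : (Fintype.card V : ℤ) + (d : ℤ) * (Pset.ncard : ℤ)
      ≤ (B.edgeSet.ncard : ℤ) + 2 * (d : ℤ) := by exact_mod_cast hNat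
  linarith
end

section
/- Let B be a finite connected graph and G a group acting on B by graph automorphisms. Then the number of G-orbits of G-pivot vertices of B is at most β(B) + 1. -/
open SimpleGraph

open Finset in
lemma myParent {W : Type*} (Γ : SimpleGraph W) (hc : Γ.Connected) (r x : W) (hx : x ≠ r) :
    ∃ y, Γ.Adj x y ∧ Γ.dist r y < Γ.dist r x := by
  obtain ⟨p, hp⟩ := hc.exists_walk_length_eq_dist x r
  match p, hp with
  | SimpleGraph.Walk.nil, _ => exact absurd rfl hx
  | SimpleGraph.Walk.cons (v := y) h q, hp =>
    refine ⟨y, h, ?_⟩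
    rw [SimpleGraph.dist_comm (u := r) (v := y), SimpleGraph.dist_comm (u := r) (v := x), ← hp]
    exact lt_of_le_of_lt (SimpleGraph.dist_le q) (by simp [SimpleGraph.Walk.length_cons])

open Finset in
lemma myConnBound {W : Type*} [Fintype W] (Γ : SimpleGraph W) (hc : Γ.Connected) :
    Fintype.card W ≤ Γ.edgeSet.ncard + 1 := by
  classical
  obtain ⟨r⟩ := hc.nonempty
  have par : ∀ x : W, ∃ y, x ≠ r → Γ.Adj x y ∧ Γ.dist r y < Γ.dist r x := by
    intro x
    by_cases hx : x = r
    · exact ⟨r, fun h => absurd hx h⟩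
    · obtain ⟨y, hy⟩ := myParent Γ hc r x hx
      exact ⟨y, fun _ => hy⟩
  choose p hp using par
  have hinj : Set.InjOn (fun x => s(x, p x)) (univ.erase r : Finset W) := by
    intro a ha b hb hab
    simp only [Finset.coe_erase, Set.mem_diff, Set.mem_singleton_iff] at ha hb
    rcases Sym2.eq_iff.mp hab with ⟨h1, h2⟩ | ⟨h1, h2⟩
    · exact h1
    · exfalso
      have ha' := (hp a ha.2).2
      have hb' := (hp b hb.2).2
      rw [h2] at ha'
      rw [← h1] at hb'
      omega
  have hmaps : ∀ x ∈ (univ.erase r : Finset W), s(x, p x) ∈ Γ.edgeFinset := by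
    intro x hx
    rw [SimpleGraph.mem_edgeFinset, SimpleGraph.mem_edgeSet]
    exact (hp x (Finset.mem_erase.mp hx).1).1
  have hle := Finset.card_le_card_of_injOn _ hmaps hinj
  have hcard : (univ.erase r : Finset W).card = Fintype.card W - 1 := by
    simp [Finset.card_erase_of_mem]
  have hV : 1 ≤ Fintype.card W := Fintype.card_pos_iff.mpr ⟨r⟩
  have he : Γ.edgeFinset.card = Γ.edgeSet.ncard := by
    rw [← Set.ncard_coe_finset, SimpleGraph.coe_edgeFinset]
  omega

def quotGraph {V : Type*} (B : SimpleGraph V) (G : Type*) [Group G] [MulAction G V] :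
    SimpleGraph (Quotient (MulAction.orbitRel G V)) where
  Adj x y := x ≠ y ∧ ∃ a b : V,
    Quotient.mk (MulAction.orbitRel G V) a = x ∧ Quotient.mk (MulAction.orbitRel G V) b = y ∧ B.Adj a b
  symm := ⟨by rintro x y ⟨hne, a, b, ha, hb, hab⟩; exact ⟨hne.symm, b, a, hb, ha, hab.symm⟩⟩
  loopless := ⟨by rintro x ⟨hne, _⟩; exact hne rfl⟩

lemma quotGraph_connected {V : Type*} (B : SimpleGraph V) (G : Type*) [Group G] [MulAction G V]
    (hconn : B.Connected) : (quotGraph B G).Connected := by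
  have hne : Nonempty (Quotient (MulAction.orbitRel G V)) := by
    obtain ⟨v⟩ := hconn.nonempty
    exact ⟨Quotient.mk _ v⟩
  rw [SimpleGraph.connected_iff]
  refine ⟨fun x y => ?_, hne⟩
  induction x using Quotient.ind
  induction y using Quotient.ind
  rename_i a b
  obtain ⟨w⟩ := (hconn a b)
  induction w with
  | nil => exact SimpleGraph.Reachable.refl _
  | @cons u v' w' h p ih =>
    refine SimpleGraph.Reachable.trans ?_ ih
    by_cases he : Quotient.mk (MulAction.orbitRel G V) u = Quotient.mk (MulAction.orbitRel G V) v'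
    · rw [he]
    · exact SimpleGraph.Adj.reachable ⟨he, u, v', rfl, rfl, h⟩

open Finset in
lemma main_count {V : Type*} [Fintype V] (B : SimpleGraph V) (G : Type*) [Group G] [MulAction G V]
    (hact : ∀ (g : G) (a b : V), B.Adj a b → B.Adj (g • a) (g • b))
    (hconn : B.Connected) :
    {x : Quotient (MulAction.orbitRel G V) |
        ∃ v, Quotient.mk (MulAction.orbitRel G V) v = x ∧ IsPivot B G v}.ncard
      + Fintype.card V ≤ B.edgeSet.ncard + 2 := by
  classical
  haveI : Fintype (Quotient (MulAction.orbitRel G V)) := Fintype.ofFinite _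
  set mk : V → Quotient (MulAction.orbitRel G V) := Quotient.mk (MulAction.orbitRel G V) with hmkdef
  have hadj : ∀ (g : G) (a b : V), B.Adj (g • a) (g • b) ↔ B.Adj a b := by
    intro g a b
    constructor
    · intro h
      have := hact g⁻¹ _ _ h
      simpa using this
    · exact hact g a b
  have hmks : ∀ (g : G) (v : V), mk (g • v) = mk v := fun g v =>
    Quotient.sound (MulAction.mem_orbit v g)
  have hmke : ∀ {a b : V}, mk a = mk b → ∃ g : G, g • b = a := by
    intro a b h
    obtain ⟨g, hg⟩ := Quotient.exact h
    exact ⟨g, hg⟩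
  set P : Finset (Quotient (MulAction.orbitRel G V)) :=
    univ.filter (fun x => ∃ v, mk v = x ∧ IsPivot B G v) with hPdef
  have hset : {x | ∃ v, mk v = x ∧ IsPivot B G v}.ncard = P.card := by
    rw [← Set.ncard_coe_finset]
    congr 1
    ext x
    simp [hPdef]
  rw [hset]
  by_cases hP1 : P.card ≤ 1
  · have := myConnBound B hconn
    omega
  push_neg at hP1
  set n : Quotient (MulAction.orbitRel G V) → ℕ :=
    fun x => (univ.filter (fun v => mk v = x)).card with hndef
  obtain ⟨r, hrP, hrmin⟩ := Finset.exists_min_image P n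
    (by rw [← Finset.card_pos]; omega)
  have hQconn := quotGraph_connected B G hconn
  have par : ∀ x, ∃ y, x ≠ r →
      (quotGraph B G).Adj x y ∧ (quotGraph B G).dist r y < (quotGraph B G).dist r x := by
    intro x
    by_cases hx : x = r
    · exact ⟨r, fun h => absurd hx h⟩
    · obtain ⟨y, hy⟩ := myParent _ hQconn r x hx
      exact ⟨y, fun _ => hy⟩
  choose pa hpa using par
  set c : V → Quotient (MulAction.orbitRel G V) → ℕ :=
    fun v y => (univ.filter (fun w => B.Adj v w ∧ mk w = y)).card with hcdef
  have cConst : ∀ (v v' : V) (y), mk v = mk v' → c v y = c v' y := by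
    intro v v' y h
    obtain ⟨g, hg⟩ := hmke h.symm
    refine Finset.card_bij' (fun w _ => g • w) (fun w _ => g⁻¹ • w) ?_ ?_ ?_ ?_
    · intro w hw
      simp only [Finset.mem_filter, Finset.mem_univ, true_and] at hw ⊢
      refine ⟨?_, by rw [hmks]; exact hw.2⟩
      rw [← hg]; exact hact g v w hw.1
    · intro w hw
      simp only [Finset.mem_filter, Finset.mem_univ, true_and] at hw ⊢
      refine ⟨?_, by rw [hmks]; exact hw.2⟩
      have := hact g⁻¹ v' w hw.1
      rw [← hg] at this
      simpa using this
    · intro w _; simp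
    · intro w _; simp
  have cPos : ∀ x, x ≠ r → ∀ v, mk v = x → 1 ≤ c v (pa x) := by
    intro x hx v hv
    obtain ⟨-, a, b, ha, hb, hab⟩ := (hpa x hx).1
    have h1 : 1 ≤ c a (pa x) := by
      refine Finset.card_pos.mpr ⟨b, ?_⟩
      simp only [Finset.mem_filter, Finset.mem_univ, true_and]
      exact ⟨hab, hb⟩
    rwa [cConst v a _ (hv.trans ha.symm)]
  have cPiv : ∀ x ∈ P, x ≠ r → ∀ v, mk v = x → 2 ≤ c v (pa x) := by
    intro x hxP hx v hv
    obtain ⟨v₀, hv₀, hpiv⟩ := (Finset.mem_filter.mp hxP).2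
    rw [cConst v v₀ _ (by rw [hv, hv₀])]
    have h1 := cPos x hx v₀ hv₀
    obtain ⟨w, hw⟩ := Finset.card_pos.mp h1
    simp only [Finset.mem_filter, Finset.mem_univ, true_and] at hw
    set O := MulAction.orbit (MulAction.stabilizer G v₀) w with hOdef
    have hsub : O ⊆ ↑(univ.filter (fun w' => B.Adj v₀ w' ∧ mk w' = pa x)) := by
      rintro _ ⟨⟨g, hg⟩, rfl⟩
      simp only [Finset.coe_filter, Set.mem_setOf_eq, Finset.mem_univ, true_and]
      have hgv : g • v₀ = v₀ := hg
      rw [Submonoid.mk_smul]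
      constructor
      · have := hact g v₀ w hw.1
        rwa [hgv] at this
      · rw [hmks]; exact hw.2
    have hO2 : 2 ≤ O.ncard := by
      have heven := hpiv w hw.1
      rw [← hOdef] at heven
      have hpos : 0 < O.ncard :=
        (Set.ncard_pos O.toFinite).mpr ⟨w, MulAction.mem_orbit_self w⟩
      obtain ⟨k, hk⟩ := heven
      omega
    calc 2 ≤ O.ncard := hO2
      _ ≤ _ := by
          simp only [hcdef]
          rw [← Set.ncard_coe_finset]
          exact Set.ncard_le_ncard hsub (Finset.finite_toSet _)
  set A : Quotient (MulAction.orbitRel G V) → Finset (V × V) := fun x =>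
    univ.filter (fun e => B.Adj e.1 e.2 ∧ mk e.1 = x ∧ mk e.2 = pa x) with hAdef
  have hAcard : ∀ x, x ≠ r → ∀ v₀, mk v₀ = x → (A x).card = n x * c v₀ (pa x) := by
    intro x hx v₀ hv₀
    simp only [hAdef]
    rw [Finset.card_eq_sum_card_fiberwise (f := Prod.fst)
      (t := univ.filter (fun v => mk v = x))
      (fun e he => by
        simp only [Finset.coe_filter, Finset.mem_filter, Set.mem_setOf_eq, Finset.mem_coe, Finset.mem_univ, true_and] at he ⊢
        exact he.2.1)]
    have hfib : ∀ v ∈ univ.filter (fun v => mk v = x),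
        ((univ.filter (fun e : V × V => B.Adj e.1 e.2 ∧ mk e.1 = x ∧ mk e.2 = pa x)).filter
          (fun e => e.1 = v)).card = c v₀ (pa x) := by
      intro v hv
      simp only [Finset.mem_filter, Finset.mem_univ, true_and] at hv
      have himg : (univ.filter (fun e : V × V => B.Adj e.1 e.2 ∧ mk e.1 = x ∧ mk e.2 = pa x)).filter
          (fun e => e.1 = v)
          = (univ.filter (fun w => B.Adj v w ∧ mk w = pa x)).image (fun w => (v, w)) := by
        ext ⟨a, b⟩
        simp only [Finset.mem_filter, Finset.mem_univ, true_and, Finset.mem_image]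
        constructor
        · rintro ⟨⟨hab, h1, h2⟩, h3⟩
          exact ⟨b, ⟨h3 ▸ hab, h2⟩, by rw [h3]⟩
        · rintro ⟨w, ⟨hw1, hw2⟩, he⟩
          cases he
          exact ⟨⟨hw1, hv, hw2⟩, rfl⟩
      rw [himg, Finset.card_image_of_injective _ (fun a b h => by simpa using h)]
      exact cConst v v₀ _ (hv.trans hv₀.symm)
    rw [Finset.sum_congr rfl hfib, Finset.sum_const, smul_eq_mul]
  set A' : Quotient (MulAction.orbitRel G V) → Finset (V × V) := fun x =>
    univ.filter (fun e => B.Adj e.1 e.2 ∧ mk e.1 = pa x ∧ mk e.2 = x) with hA'def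
  set T : Quotient (MulAction.orbitRel G V) → Finset (V × V) := fun x =>
    univ.filter (fun e => B.Adj e.1 e.2 ∧
      ((mk e.1 = x ∧ mk e.2 = pa x) ∨ (mk e.1 = pa x ∧ mk e.2 = x))) with hTdef
  have hTcard : ∀ x, x ≠ r → (T x).card = 2 * (A x).card := by
    intro x hx
    have hne : x ≠ pa x := (hpa x hx).1.ne
    have hunion : T x = A x ∪ A' x := by
      simp only [hTdef, hAdef, hA'def]
      ext e
      simp only [Finset.mem_filter, Finset.mem_univ, true_and, Finset.mem_union]
      tauto
    have hdisj : Disjoint (A x) (A' x) := by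
      rw [Finset.disjoint_left]
      intro e he he'
      simp only [hAdef, hA'def, Finset.mem_filter, Finset.mem_univ, true_and] at he he'
      exact hne (he.2.1.symm.trans he'.2.1)
    have hswap : (A' x).card = (A x).card := by
      simp only [hAdef, hA'def]
      refine Finset.card_bij' (fun e _ => (e.2, e.1)) (fun e _ => (e.2, e.1)) ?_ ?_ ?_ ?_
      · intro e he
        simp only [Finset.mem_filter, Finset.mem_univ, true_and] at he ⊢
        exact ⟨he.1.symm, he.2.2, he.2.1⟩
      · intro e he
        simp only [Finset.mem_filter, Finset.mem_univ, true_and] at he ⊢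
        exact ⟨he.1.symm, he.2.2, he.2.1⟩
      · intro e _; rfl
      · intro e _; rfl
    rw [hunion, Finset.card_union_of_disjoint hdisj, hswap]
    ring
  have hTdisj : ∀ x ∈ univ.erase r, ∀ y ∈ univ.erase r, x ≠ y → Disjoint (T x) (T y) := by
    intro x hx y hy hxy
    have hx' := (Finset.mem_erase.mp hx).1
    have hy' := (Finset.mem_erase.mp hy).1
    have dx := (hpa x hx').2
    have dy := (hpa y hy').2
    rw [Finset.disjoint_left]
    intro e hex hey
    simp only [hTdef, Finset.mem_filter, Finset.mem_univ, true_and] at hex hey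
    rcases hex.2 with ⟨h1, h2⟩ | ⟨h1, h2⟩ <;> rcases hey.2 with ⟨h3, h4⟩ | ⟨h3, h4⟩
    · exact hxy (h1 ▸ h3 ▸ rfl)
    · rw [h1] at h3
      rw [h2] at h4
      rw [← h3] at dy
      rw [h4] at dx
      omega
    · rw [h3] at h1
      rw [h4] at h2
      rw [← h1] at dx
      rw [h2] at dy
      omega
    · exact hxy (h2 ▸ h4 ▸ rfl)
  have hD : (univ.filter (fun e : V × V => B.Adj e.1 e.2)).card = 2 * B.edgeSet.ncard := by
    have e1 : Fintype.card B.Dart = (univ.filter (fun e : V × V => B.Adj e.1 e.2)).card := by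
      rw [← Fintype.card_subtype]
      exact Fintype.card_congr
        ⟨fun d => ⟨d.toProd, d.adj⟩, fun p => ⟨p.1, p.2⟩, fun d => rfl, fun p => rfl⟩
    have e2 := SimpleGraph.dart_card_eq_twice_card_edges B
    have e3 : B.edgeFinset.card = B.edgeSet.ncard := by rw [← Set.ncard_coe_finset, SimpleGraph.coe_edgeFinset]
    omega
  have hsum : ∑ x ∈ univ.erase r, (T x).card ≤ 2 * B.edgeSet.ncard := by
    rw [← Finset.card_biUnion hTdisj, ← hD]
    refine Finset.card_le_card ?_
    intro e he
    simp only [Finset.mem_biUnion] at he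
    obtain ⟨x, -, hex⟩ := he
    simp only [hTdef, Finset.mem_filter, Finset.mem_univ, true_and] at hex ⊢
    exact hex.1
  have key : ∀ x ∈ univ.erase r, 2 * (n x + if x ∈ P then n x else 0) ≤ (T x).card := by
    intro x hx
    have hx' := (Finset.mem_erase.mp hx).1
    obtain ⟨-, a, b, ha, hb, hab⟩ := (hpa x hx').1
    have hax : mk a = x := ha
    rw [hTcard x hx', hAcard x hx' a hax]
    by_cases hxP : x ∈ P
    · have h2 := cPiv x hxP hx' a hax
      simp only [hxP, if_true]
      nlinarith [h2]
    · have h1 := cPos x hx' a hax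
      simp only [hxP, if_false]
      nlinarith [h1]
  have hsum2 : ∑ x ∈ univ.erase r, 2 * (n x + if x ∈ P then n x else 0)
      ≤ 2 * B.edgeSet.ncard :=
    le_trans (Finset.sum_le_sum key) hsum
  have hnV : ∑ x : Quotient (MulAction.orbitRel G V), n x = Fintype.card V := by
    simp only [hndef]
    rw [← Finset.card_univ (α := V)]
    exact (Finset.card_eq_sum_card_fiberwise (fun v _ => Finset.mem_univ (mk v))).symm
  have hsplit : ∑ x ∈ univ.erase r, n x + n r = Fintype.card V := by
    rw [← hnV]
    exact Finset.sum_erase_add _ _ (Finset.mem_univ r)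
  have hPsum : ∑ x ∈ univ.erase r, (if x ∈ P then n x else 0) = ∑ x ∈ P.erase r, n x := by
    rw [Finset.sum_ite_mem]
    congr 1
    ext x
    simp only [Finset.mem_inter, Finset.mem_erase, Finset.mem_univ, true_and, and_comm]
  have hPmin : (P.card - 1) * n r ≤ ∑ x ∈ P.erase r, n x := by
    have h := Finset.card_nsmul_le_sum (P.erase r) n (n r)
      (fun x hx => hrmin x (Finset.mem_of_mem_erase hx))
    rwa [Finset.card_erase_of_mem hrP, smul_eq_mul] at h
  have hL : (∑ x ∈ univ.erase r, 2 * (n x + if x ∈ P then n x else 0))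
      = 2 * ((∑ x ∈ univ.erase r, n x) + ∑ x ∈ P.erase r, n x) := by
    rw [← Finset.mul_sum, Finset.sum_add_distrib, hPsum]
  rw [hL] at hsum2
  have hnr1 : 1 ≤ n r := by
    obtain ⟨v, hv⟩ := Quotient.exists_rep r
    refine Finset.card_pos.mpr ⟨v, ?_⟩
    simp only [Finset.mem_filter, Finset.mem_univ, true_and]
    exact hv
  have hmul : (P.card - 1) * n r = (P.card - 2) * n r + n r := by
    have h : P.card - 1 = (P.card - 2) + 1 := by omega
    rw [h, Nat.add_mul, one_mul]
  have hge : P.card - 2 ≤ (P.card - 2) * n r := Nat.le_mul_of_pos_right _ (by omega)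
  omega

/-- If a group `G` acts on a finite connected graph `B` by graph automorphisms, then the number
of `G`-orbits of `G`-pivot vertices is at most `β(B) + 1`. -/
theorem stmt_5 {V : Type*} [Fintype V] (B : SimpleGraph V)
    (G : Type*) [Group G] [MulAction G V]
    (hact : ∀ (g : G) (a b : V), B.Adj a b → B.Adj (g • a) (g • b))
    (hconn : B.Connected) :
    ({s : Set V | ∃ v : V, IsPivot B G v ∧ s = MulAction.orbit G v}.ncard : ℤ)
      ≤ ((B.edgeSet.ncard : ℤ) - (Fintype.card V : ℤ) + 1) + 1 := by
  classical
  have h := main_count B G hact hconn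
  have hinj : Function.Injective
      (fun x : Quotient (MulAction.orbitRel G V) =>
        {w : V | Quotient.mk (MulAction.orbitRel G V) w = x}) := by
    intro x y hxy
    obtain ⟨v, hv⟩ := Quotient.exists_rep x
    simp only at hxy
    have hvy : v ∈ {w : V | Quotient.mk (MulAction.orbitRel G V) w = y} := by
      rw [← hxy]
      exact hv
    rw [← hv]
    exact hvy
  have hSeq : {s : Set V | ∃ v : V, IsPivot B G v ∧ s = MulAction.orbit G v}
      = (fun x : Quotient (MulAction.orbitRel G V) =>
          {w : V | Quotient.mk (MulAction.orbitRel G V) w = x}) ''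
        {x : Quotient (MulAction.orbitRel G V) |
          ∃ v, Quotient.mk (MulAction.orbitRel G V) v = x ∧ IsPivot B G v} := by
    ext s
    simp only [Set.mem_setOf_eq, Set.mem_image]
    constructor
    · rintro ⟨v, hp, rfl⟩
      refine ⟨Quotient.mk (MulAction.orbitRel G V) v, ⟨v, rfl, hp⟩, ?_⟩
      ext w
      exact ⟨fun hw => Quotient.exact hw, fun hw => Quotient.sound hw⟩
    · rintro ⟨x, ⟨v, rfl, hp⟩, rfl⟩
      refine ⟨v, hp, ?_⟩
      ext w
      exact ⟨fun hw => Quotient.exact hw, fun hw => Quotient.sound hw⟩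
  rw [hSeq, Set.ncard_image_of_injective _ hinj]
  omega
end

section
/- Let B be a finite connected graph and G a group acting on B by graph automorphisms. If the number N of G-orbits of G-pivot vertices equals β(B) + 1, then either the set of G-pivot vertices coincides with the set of G-fixed vertices, or β(B) = 1 and B has no G-fixed vertices. -/
open SimpleGraph

set_option linter.unusedSectionVars false
set_option maxHeartbeats 1000000

namespace StmtAux

section Basic

variable {V : Type*} {G : Type*} [Group G] [MulAction G V]

/-- The `smul` graph homomorphism coming from `hact`. -/
def smulHom (B : SimpleGraph V) (hact : ∀ (g : G) (a b : V), B.Adj a b → B.Adj (g • a) (g • b))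
    (g : G) : B →g B where
  toFun := fun x => g • x
  map_rel' := fun h => hact g _ _ h

lemma adj_smul_iff (B : SimpleGraph V)
    (hact : ∀ (g : G) (a b : V), B.Adj a b → B.Adj (g • a) (g • b)) (g : G) (a b : V) :
    B.Adj (g • a) (g • b) ↔ B.Adj a b := by
  constructor
  · intro h
    have := hact g⁻¹ _ _ h
    simpa using this
  · exact hact g a b

lemma dist_smul_le (B : SimpleGraph V)
    (hact : ∀ (g : G) (a b : V), B.Adj a b → B.Adj (g • a) (g • b))
    (hconn : B.Connected) (g : G) (x y : V) :
    B.dist (g • x) (g • y) ≤ B.dist x y := by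
  obtain ⟨p, hp⟩ := hconn.exists_walk_length_eq_dist x y
  have := SimpleGraph.dist_le (p.map (smulHom B hact g))
  rwa [SimpleGraph.Walk.length_map, hp] at this

lemma dist_smul (B : SimpleGraph V)
    (hact : ∀ (g : G) (a b : V), B.Adj a b → B.Adj (g • a) (g • b))
    (hconn : B.Connected) (g : G) (x y : V) :
    B.dist (g • x) (g • y) = B.dist x y := by
  refine le_antisymm (dist_smul_le B hact hconn g x y) ?_
  have := dist_smul_le B hact hconn g⁻¹ (g • x) (g • y)
  simpa using this

/-- A finite set which is invariant under a group action and all of whose members have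
even orbits has even cardinality. -/
lemma even_ncard_of_invariant [Fintype V] {H : Type*} [Group H] [MulAction H V] :
    ∀ (n : ℕ) (S : Set V), S.ncard = n →
      (∀ (h : H) (w : V), w ∈ S → h • w ∈ S) →
      (∀ w ∈ S, Even ((MulAction.orbit H w).ncard)) →
      Even S.ncard := by
  intro n
  induction n using Nat.strong_induction_on with
  | _ n ih =>
    intro S hcard hcl hev
    rcases S.eq_empty_or_nonempty with rfl | ⟨w₀, hw₀⟩
    · simp
    · have hSfin : S.Finite := Set.toFinite S
      set T : Set V := MulAction.orbit H w₀ with hT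
      have hTS : T ⊆ S := by
        rintro x ⟨h, rfl⟩
        exact hcl h w₀ hw₀
      have hTfin : T.Finite := Set.toFinite T
      have hTne : T.Nonempty := ⟨w₀, MulAction.mem_orbit_self w₀⟩
      have hsplit : (S \ T).ncard + T.ncard = S.ncard :=
        Set.ncard_diff_add_ncard_of_subset hTS hSfin
      have hTpos : 0 < T.ncard := (Set.ncard_pos hTfin).mpr hTne
      have hlt : (S \ T).ncard < n := by omega
      have hclosed : ∀ (h : H) (w : V), w ∈ S \ T → h • w ∈ S \ T := by
        rintro h w ⟨hwS, hwT⟩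
        refine ⟨hcl h w hwS, fun hmem => hwT ?_⟩
        rw [hT] at hmem ⊢
        obtain ⟨k, hk⟩ := hmem
        refine ⟨h⁻¹ * k, ?_⟩
        show (h⁻¹ * k) • w₀ = w
        have hk' : k • w₀ = h • w := hk
        rw [mul_smul, hk']
        simp
      have hev' : ∀ w ∈ S \ T, Even ((MulAction.orbit H w).ncard) :=
        fun w hw => hev w hw.1
      have h1 : Even (S \ T).ncard := ih _ hlt _ rfl hclosed hev'
      have h2 : Even T.ncard := hev w₀ hw₀
      rw [← hsplit] at *
      exact h1.add h2


end Basic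

section Pivot

variable {V : Type*} {G : Type*} [Group G] [MulAction G V]


lemma orbit_stab_smul (g : G) (v w : V) :
    MulAction.orbit (MulAction.stabilizer G (g • v)) (g • w)
      = (fun x => g • x) '' (MulAction.orbit (MulAction.stabilizer G v) w) := by
  ext x
  constructor
  · rintro ⟨⟨h, hh⟩, rfl⟩
    have hh' : h • (g • v) = g • v := hh
    have hmem : g⁻¹ * h * g ∈ MulAction.stabilizer G v := by
      have : (g⁻¹ * h * g) • v = v := by
        rw [mul_smul, mul_smul, hh']
        simp
      exact this
    refine ⟨(⟨g⁻¹ * h * g, hmem⟩ : MulAction.stabilizer G v) • w, ⟨⟨g⁻¹ * h * g, hmem⟩, rfl⟩, ?_⟩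
    show g • ((g⁻¹ * h * g) • w) = (⟨h, hh⟩ : MulAction.stabilizer G (g • v)) • (g • w)
    show g • ((g⁻¹ * h * g) • w) = h • (g • w)
    rw [mul_smul, mul_smul, ← mul_smul g g⁻¹, mul_inv_cancel, one_smul, ← mul_smul]
  · rintro ⟨y, ⟨⟨h, hh⟩, rfl⟩, rfl⟩
    have hh' : h • v = v := hh
    have hmem : g * h * g⁻¹ ∈ MulAction.stabilizer G (g • v) := by
      show (g * h * g⁻¹) • (g • v) = g • v
      rw [mul_smul, mul_smul, inv_smul_smul, hh']
    refine ⟨⟨g * h * g⁻¹, hmem⟩, ?_⟩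
    show (g * h * g⁻¹) • (g • w) = g • ((⟨h, hh⟩ : MulAction.stabilizer G v) • w)
    show (g * h * g⁻¹) • (g • w) = g • (h • w)
    rw [mul_smul, mul_smul, inv_smul_smul]

lemma isPivot_smul (B : SimpleGraph V)
    (hact : ∀ (g : G) (a b : V), B.Adj a b → B.Adj (g • a) (g • b))
    {v : V} (hp : IsPivot B G v) (g : G) : IsPivot B G (g • v) := by
  intro w hw
  have hw' : B.Adj v (g⁻¹ • w) := by
    have := hact g⁻¹ _ _ hw
    simpa using this
  have := hp _ hw'
  have horb := orbit_stab_smul (G := G) g v (g⁻¹ • w)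
  rw [smul_inv_smul] at horb
  rw [horb, Set.ncard_image_of_injective _ (MulAction.injective g)]
  exact this


end Pivot

section Dist


set_option linter.unusedSectionVars false

variable {V : Type*} [Fintype V]

noncomputable def hdist (B : SimpleGraph V) (S : Set V) (v : V) : ℕ :=
  sInf ((fun u => B.dist v u) '' S)

variable {B : SimpleGraph V} {S : Set V}

lemma hdist_exists (hS : S.Nonempty) (v : V) : ∃ u ∈ S, B.dist v u = hdist B S v :=
  Nat.sInf_mem (hS.image _)

lemma hdist_le {u : V} (hu : u ∈ S) (v : V) : hdist B S v ≤ B.dist v u :=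
  Nat.sInf_le ⟨u, hu, rfl⟩

lemma hdist_eq_zero_of_mem {v : V} (hv : v ∈ S) : hdist B S v = 0 :=
  Nat.le_zero.mp (by simpa [SimpleGraph.dist_self] using hdist_le (B := B) hv v)

lemma mem_of_hdist_eq_zero (hconn : B.Connected) (hS : S.Nonempty) {v : V}
    (hv : hdist B S v = 0) : v ∈ S := by
  obtain ⟨u, huS, hu⟩ := hdist_exists (B := B) hS v
  rw [hv] at hu
  rwa [hconn.dist_eq_zero_iff.mp hu]

lemma hdist_descend (hconn : B.Connected) (hS : S.Nonempty) {v : V} (hv : v ∉ S) :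
    ∃ w, B.Adj v w ∧ hdist B S w < hdist B S v := by
  obtain ⟨u, huS, hu⟩ := hdist_exists (B := B) hS v
  have hne : hdist B S v ≠ 0 := fun h => hv (mem_of_hdist_eq_zero hconn hS h)
  obtain ⟨p, hp⟩ := (hconn v u).exists_walk_length_eq_dist
  rw [hu] at hp
  cases p with
  | nil => exact absurd hp.symm (by simpa using hne)
  | cons hadj q =>
    rename_i w
    refine ⟨w, hadj, ?_⟩
    have h1 : hdist B S w ≤ B.dist w u := hdist_le huS w
    have h2 : B.dist w u ≤ q.length := SimpleGraph.dist_le q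
    have h3 : q.length + 1 = hdist B S v := by simpa using hp
    omega

section Count

variable [DecidableEq V] [DecidableRel B.Adj]

noncomputable def downF (B : SimpleGraph V) (S : Set V) [DecidableRel B.Adj] (v : V) :
    Finset V :=
  Finset.univ.filter (fun w => B.Adj v w ∧ hdist B S w < hdist B S v)

noncomputable def edgesIn (B : SimpleGraph V) (S : Set V) [DecidableEq V]
    [DecidableRel B.Adj] : Finset (Sym2 V) :=
  @Finset.filter _ (fun e => ∀ x ∈ e, x ∈ S) (Classical.decPred _) B.edgeFinset

lemma mem_edgesIn {B : SimpleGraph V} {S : Set V} [DecidableEq V] [DecidableRel B.Adj]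
    {e : Sym2 V} : e ∈ edgesIn B S ↔ e ∈ B.edgeFinset ∧ ∀ x ∈ e, x ∈ S := by
  rw [edgesIn]
  exact @Finset.mem_filter _ _ (Classical.decPred _) _ _

lemma master_count :
    (∑ v, (downF B S v).card) + (edgesIn B S).card ≤ B.edgeFinset.card := by
  classical
  -- directed down-pairs
  set P : Finset (V × V) :=
    Finset.univ.filter (fun p : V × V => B.Adj p.1 p.2 ∧ hdist B S p.2 < hdist B S p.1) with hP
  have hsum : ∑ v, (downF B S v).card = P.card := by
    rw [Finset.card_eq_sum_card_fiberwise (f := Prod.fst) (t := Finset.univ)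
      (fun x _ => Finset.mem_univ _)]
    refine Finset.sum_congr rfl (fun v _ => ?_)
    refine Finset.card_bij (fun w _ => (v, w)) ?_ ?_ ?_
    · intro w hw
      simp only [downF, Finset.mem_filter, Finset.mem_univ, true_and] at hw
      simp [hP, hw.1, hw.2]
    · intro a ha b hb h
      simpa using congrArg Prod.snd h
    · rintro ⟨a, b⟩ hab
      simp only [hP, Finset.mem_filter, Finset.mem_univ, true_and] at hab
      obtain ⟨⟨h1, h2⟩, h3⟩ := hab
      subst h3
      exact ⟨b, by simp [downF, h1, h2], rfl⟩
  -- map to edges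
  set T1 : Finset (Sym2 V) := P.image (fun p => s(p.1, p.2)) with hT1
  have hT1card : T1.card = P.card := by
    rw [hT1]
    refine Finset.card_image_of_injOn ?_
    rintro ⟨a, b⟩ hab ⟨c, d⟩ hcd h
    have hab' : B.Adj a b ∧ hdist B S b < hdist B S a := by
      have h' : (a, b) ∈ P := hab
      simpa [hP] using h'
    have hcd' : B.Adj c d ∧ hdist B S d < hdist B S c := by
      have h' : (c, d) ∈ P := hcd
      simpa [hP] using h'
    rw [Sym2.eq_iff] at h
    rcases h with ⟨rfl, rfl⟩ | ⟨rfl, rfl⟩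
    · rfl
    · obtain ⟨-, h2⟩ := hab'
      obtain ⟨-, h4⟩ := hcd'
      dsimp only at h2 h4
      exact absurd h4 (by omega)
  have hT1sub : T1 ⊆ B.edgeFinset := by
    intro e he
    rw [hT1] at he
    obtain ⟨⟨a, b⟩, hab, rfl⟩ := Finset.mem_image.mp he
    simp only [hP, Finset.mem_filter, Finset.mem_univ, true_and] at hab
    simpa [SimpleGraph.mem_edgeFinset] using hab.1
  have hT2sub : edgesIn B S ⊆ B.edgeFinset := fun e he => (mem_edgesIn.mp he).1
  have hdisj : Disjoint T1 (edgesIn B S) := by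
    rw [Finset.disjoint_left]
    intro e he1 he2
    rw [hT1] at he1
    obtain ⟨⟨a, b⟩, hab, rfl⟩ := Finset.mem_image.mp he1
    simp only [hP, Finset.mem_filter, Finset.mem_univ, true_and] at hab
    rw [mem_edgesIn] at he2
    have haS : a ∈ S := he2.2 a (by simp)
    have : hdist B S a = 0 := hdist_eq_zero_of_mem haS
    omega
  calc (∑ v, (downF B S v).card) + (edgesIn B S).card
      = T1.card + (edgesIn B S).card := by rw [hsum, hT1card]
    _ = (T1 ∪ edgesIn B S).card := (Finset.card_union_of_disjoint hdisj).symm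
    _ ≤ B.edgeFinset.card := Finset.card_le_card (Finset.union_subset hT1sub hT2sub)

end Count


end Dist

section Key

variable {V : Type*} [Fintype V] {G : Type*} [Group G] [MulAction G V]
variable {B : SimpleGraph V}

lemma hdist_smul_invariant {S : Set V}
    (hact : ∀ (g : G) (a b : V), B.Adj a b → B.Adj (g • a) (g • b))
    (hconn : B.Connected)
    (hSinv : ∀ (g : G) (x : V), x ∈ S → g • x ∈ S) (g : G) (v : V) :
    hdist B S (g • v) = hdist B S v := by
  unfold hdist
  congr 1
  ext n
  constructor
  · rintro ⟨u, hu, rfl⟩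
    refine ⟨g⁻¹ • u, hSinv g⁻¹ u hu, ?_⟩
    show B.dist v (g⁻¹ • u) = B.dist (g • v) u
    rw [← dist_smul B hact hconn g v (g⁻¹ • u), smul_inv_smul]
  · rintro ⟨u, hu, rfl⟩
    exact ⟨g • u, hSinv g u hu, dist_smul B hact hconn g v u⟩

lemma downF_card_even [DecidableRel B.Adj] {S : Set V}
    (hact : ∀ (g : G) (a b : V), B.Adj a b → B.Adj (g • a) (g • b))
    (hconn : B.Connected)
    (hSinv : ∀ (g : G) (x : V), x ∈ S → g • x ∈ S)
    {v : V} (hp : IsPivot B G v) : Even (downF B S v).card := by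
  have hcoe : ((downF B S v : Finset V) : Set V).ncard = (downF B S v).card :=
    Set.ncard_coe_finset _
  rw [← hcoe]
  refine even_ncard_of_invariant (H := MulAction.stabilizer G v) _ _ rfl ?_ ?_
  · rintro ⟨h, hh⟩ w hw
    have hh' : h • v = v := hh
    have hw' : B.Adj v w ∧ hdist B S w < hdist B S v := by
      simpa [downF] using hw
    have hadj : B.Adj v (h • w) := by
      have := hact h _ _ hw'.1
      rwa [hh'] at this
    have hdis : hdist B S (h • w) = hdist B S w := hdist_smul_invariant hact hconn hSinv h w
    show (⟨h, hh⟩ : MulAction.stabilizer G v) • w ∈ ((downF B S v : Finset V) : Set V)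
    have hsmul : (⟨h, hh⟩ : MulAction.stabilizer G v) • w = h • w := rfl
    rw [hsmul]
    simp only [Finset.coe_filter, downF, Set.mem_setOf_eq, Finset.mem_univ, true_and]
    exact ⟨hadj, by omega⟩
  · intro w hw
    have hw' : B.Adj v w ∧ hdist B S w < hdist B S v := by
      simpa [downF] using hw
    exact hp w hw'.1

lemma key_inequality [DecidableEq V] [DecidableRel B.Adj]
    (hact : ∀ (g : G) (a b : V), B.Adj a b → B.Adj (g • a) (g • b))
    (hconn : B.Connected) (r : V) :
    Fintype.card V
      + {v : V | IsPivot B G v ∧ v ∉ MulAction.orbit G r}.ncard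
      ≤ B.edgeFinset.card + (MulAction.orbit G r).ncard := by
  classical
  set S : Set V := MulAction.orbit G r with hSdef
  have hS : S.Nonempty := ⟨r, MulAction.mem_orbit_self r⟩
  have hSinv : ∀ (g : G) (x : V), x ∈ S → g • x ∈ S := by
    rintro g x ⟨k, rfl⟩
    exact ⟨g * k, (mul_smul g k r)⟩
  have hmaster : (∑ v, (downF B S v).card) ≤ B.edgeFinset.card :=
    le_trans (Nat.le_add_right _ _) (master_count (B := B) (S := S))
  have hpoint : ∀ v ∈ (Finset.univ : Finset V),
      ((if v ∉ S then 1 else 0) + (if IsPivot B G v ∧ v ∉ S then 1 else 0))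
        ≤ (downF B S v).card := by
    intro v _
    by_cases hvS : v ∈ S
    · simp [hvS]
    · have hpos : 1 ≤ (downF B S v).card := by
        obtain ⟨w, hw1, hw2⟩ := hdist_descend hconn hS hvS
        refine Finset.card_pos.mpr ⟨w, ?_⟩
        simp [downF, hw1, hw2]
      rw [if_pos hvS]
      by_cases hpv : IsPivot B G v
      · obtain ⟨k, hk⟩ := downF_card_even hact hconn hSinv hpv
        rw [if_pos ⟨hpv, hvS⟩]
        omega
      · rw [if_neg (fun h => hpv h.1)]
        omega
  have hsum := Finset.sum_le_sum hpoint
  have hsplit : (∑ v, ((if v ∉ S then 1 else 0) + (if IsPivot B G v ∧ v ∉ S then 1 else 0)))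
      = (Finset.univ.filter (fun v : V => v ∉ S)).card
        + (Finset.univ.filter (fun v => IsPivot B G v ∧ v ∉ S)).card := by
    rw [Finset.sum_add_distrib]
    congr 1 <;> rw [Finset.card_filter]
  have hcards : (Finset.univ.filter (fun v : V => v ∈ S)).card
      + (Finset.univ.filter (fun v : V => v ∉ S)).card = Fintype.card V := by
    rw [← Finset.card_univ]
    exact Finset.card_filter_add_card_filter_not _
  have hScard : (Finset.univ.filter (fun v : V => v ∈ S)).card = S.ncard := by
    rw [Set.ncard_eq_toFinset_card']
    congr 1
    ext x
    simp
  have hfinal := le_trans (le_of_eq hsplit.symm) (le_trans hsum hmaster)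
  have hPout : {v : V | IsPivot B G v ∧ v ∉ S}.ncard
      = (Finset.univ.filter (fun v => IsPivot B G v ∧ v ∉ S)).card := by
    rw [Set.ncard_eq_toFinset_card']
    congr 1
    ext x
    simp [hSdef]
  omega

lemma card_le_edge_add_one [DecidableEq V] [DecidableRel B.Adj]
    (hconn : B.Connected) :
    Fintype.card V ≤ B.edgeFinset.card + 1 := by
  classical
  have hne : Nonempty V := hconn.nonempty
  obtain ⟨r⟩ := hne
  set S : Set V := {r} with hSdef
  have hS : S.Nonempty := ⟨r, rfl⟩
  have hmaster : (∑ v, (downF B S v).card) ≤ B.edgeFinset.card :=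
    le_trans (Nat.le_add_right _ _) (master_count (B := B) (S := S))
  have hpoint : ∀ v ∈ (Finset.univ : Finset V),
      (if v ∉ S then 1 else 0) ≤ (downF B S v).card := by
    intro v _
    by_cases hvS : v ∈ S
    · simp [hvS]
    · obtain ⟨w, hw1, hw2⟩ := hdist_descend hconn hS hvS
      have : 1 ≤ (downF B S v).card := by
        refine Finset.card_pos.mpr ⟨w, ?_⟩
        simp [downF, hw1, hw2]
      simpa [hvS] using this
  have hsum := Finset.sum_le_sum hpoint
  have hsplit : (∑ v : V, (if v ∉ S then 1 else 0))
      = (Finset.univ.filter (fun v : V => v ∉ S)).card := by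
    rw [Finset.card_filter]
  have hcards : (Finset.univ.filter (fun v : V => v ∈ S)).card
      + (Finset.univ.filter (fun v : V => v ∉ S)).card = Fintype.card V := by
    rw [← Finset.card_univ]
    exact Finset.card_filter_add_card_filter_not _
  have hone : (Finset.univ.filter (fun v : V => v ∈ S)).card = 1 := by
    have : (Finset.univ.filter (fun v : V => v ∈ S)) = {r} := by
      ext x
      simp [hSdef]
    rw [this, Finset.card_singleton]
  omega

end Key


section OrbitCount

variable {V : Type*} [Fintype V] {G : Type*} [Group G] [MulAction G V]
variable {B : SimpleGraph V}

lemma pivotSets_eq (B : SimpleGraph V) (G : Type*) [Group G] [MulAction G V]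
    [DecidableEq (Set V)] [DecidablePred (IsPivot B G ·)] :
    {s : Set V | ∃ v : V, IsPivot B G v ∧ s = MulAction.orbit G v}
      = ↑((Finset.univ.filter (fun v => IsPivot B G v)).image
          (fun v => MulAction.orbit G v)) := by
  ext s
  simp only [Set.mem_setOf_eq, Finset.coe_image, Set.mem_image, Finset.mem_coe,
    Finset.mem_filter, Finset.mem_univ, true_and]
  constructor
  · rintro ⟨v, hv, rfl⟩
    exact ⟨v, hv, rfl⟩
  · rintro ⟨v, hv, rfl⟩
    exact ⟨v, hv, rfl⟩

lemma npivot_le_pivot :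
    {s : Set V | ∃ v : V, IsPivot B G v ∧ s = MulAction.orbit G v}.ncard
      ≤ {v : V | IsPivot B G v}.ncard := by
  classical
  rw [pivotSets_eq B G, Set.ncard_coe_finset]
  have h2 : {v : V | IsPivot B G v}.ncard
      = (Finset.univ.filter (fun v => IsPivot B G v)).card := by
    rw [Set.ncard_eq_toFinset_card']
    congr 1
    ext x
    simp
  rw [h2]
  exact Finset.card_image_le

lemma all_fixed_of_card_le
    (hact : ∀ (g : G) (a b : V), B.Adj a b → B.Adj (g • a) (g • b))
    (hle : {v : V | IsPivot B G v}.ncard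
      ≤ {s : Set V | ∃ v : V, IsPivot B G v ∧ s = MulAction.orbit G v}.ncard) :
    ∀ v : V, IsPivot B G v → ∀ g : G, g • v = v := by
  classical
  intro v₁ hv₁ g₁
  by_contra hne
  set PF : Finset V := Finset.univ.filter (fun v => IsPivot B G v) with hPF
  set SF : Finset (Set V) := PF.image (fun v => MulAction.orbit G v) with hSF
  have hP : {v : V | IsPivot B G v}.ncard = PF.card := by
    rw [Set.ncard_eq_toFinset_card']
    congr 1
    ext x
    simp [hPF]
  have hN : {s : Set V | ∃ v : V, IsPivot B G v ∧ s = MulAction.orbit G v}.ncard = SF.card := by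
    rw [pivotSets_eq B G, Set.ncard_coe_finset]
  rw [hP, hN] at hle
  have hfib : PF.card = ∑ s ∈ SF, (PF.filter (fun v => MulAction.orbit G v = s)).card :=
    Finset.card_eq_sum_card_fiberwise (fun x hx => Finset.mem_image_of_mem _ hx)
  have hlow : ∀ s ∈ SF, 1 ≤ (PF.filter (fun v => MulAction.orbit G v = s)).card := by
    intro s hs
    obtain ⟨u, hu, rfl⟩ := Finset.mem_image.mp hs
    exact Finset.card_pos.mpr ⟨u, Finset.mem_filter.mpr ⟨hu, rfl⟩⟩
  have hbig : 2 ≤ (PF.filter (fun v => MulAction.orbit G v = MulAction.orbit G v₁)).card := by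
    have hmem1 : v₁ ∈ PF.filter (fun v => MulAction.orbit G v = MulAction.orbit G v₁) :=
      Finset.mem_filter.mpr ⟨by simp [hPF, hv₁], rfl⟩
    have hmem2 : g₁ • v₁ ∈ PF.filter (fun v => MulAction.orbit G v = MulAction.orbit G v₁) :=
      Finset.mem_filter.mpr ⟨by simp [hPF, isPivot_smul B hact hv₁ g₁],
        MulAction.orbit_smul g₁ v₁⟩
    exact Finset.one_lt_card.mpr ⟨v₁, hmem1, g₁ • v₁, hmem2, fun h => hne h.symm⟩
  have horb_mem : MulAction.orbit G v₁ ∈ SF :=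
    Finset.mem_image_of_mem _ (by simp [hPF, hv₁])
  have : SF.card < PF.card := by
    rw [hfib]
    calc SF.card = ∑ _s ∈ SF, 1 := by simp
    _ < ∑ s ∈ SF, (PF.filter (fun v => MulAction.orbit G v = s)).card := by
        refine Finset.sum_lt_sum hlow ⟨MulAction.orbit G v₁, horb_mem, ?_⟩
        omega
  omega

lemma min_orbit_bound
    (hact : ∀ (g : G) (a b : V), B.Adj a b → B.Adj (g • a) (g • b))
    {v₀ : V} (h₀ : IsPivot B G v₀)
    (hmin : ∀ v : V, IsPivot B G v →
      (MulAction.orbit G v₀).ncard ≤ (MulAction.orbit G v).ncard) :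
    {s : Set V | ∃ v : V, IsPivot B G v ∧ s = MulAction.orbit G v}.ncard
        * (MulAction.orbit G v₀).ncard
      ≤ {v : V | IsPivot B G v}.ncard := by
  classical
  set PF : Finset V := Finset.univ.filter (fun v => IsPivot B G v) with hPF
  set SF : Finset (Set V) := PF.image (fun v => MulAction.orbit G v) with hSF
  have hP : {v : V | IsPivot B G v}.ncard = PF.card := by
    rw [Set.ncard_eq_toFinset_card']
    congr 1
    ext x
    simp [hPF]
  have hN : {s : Set V | ∃ v : V, IsPivot B G v ∧ s = MulAction.orbit G v}.ncard = SF.card := by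
    rw [pivotSets_eq B G, Set.ncard_coe_finset]
  rw [hP, hN]
  have hfib : PF.card = ∑ s ∈ SF, (PF.filter (fun v => MulAction.orbit G v = s)).card :=
    Finset.card_eq_sum_card_fiberwise (fun x hx => Finset.mem_image_of_mem _ hx)
  have hlow : ∀ s ∈ SF, (MulAction.orbit G v₀).ncard
      ≤ (PF.filter (fun v => MulAction.orbit G v = s)).card := by
    intro s hs
    obtain ⟨u, hu, rfl⟩ := Finset.mem_image.mp hs
    have hu' : IsPivot B G u := by simpa [hPF] using hu
    have hsub : (MulAction.orbit G u).toFinset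
        ⊆ PF.filter (fun v => MulAction.orbit G v = MulAction.orbit G u) := by
      intro x hx
      rw [Set.mem_toFinset] at hx
      obtain ⟨k, rfl⟩ := hx
      refine Finset.mem_filter.mpr ⟨?_, MulAction.orbit_smul k u⟩
      simp [hPF, isPivot_smul B hact hu' k]
    calc (MulAction.orbit G v₀).ncard ≤ (MulAction.orbit G u).ncard := hmin u hu'
      _ = (MulAction.orbit G u).toFinset.card := Set.ncard_eq_toFinset_card' _
      _ ≤ _ := Finset.card_le_card hsub
  calc SF.card * (MulAction.orbit G v₀).ncard
      = ∑ _s ∈ SF, (MulAction.orbit G v₀).ncard := by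
        rw [Finset.sum_const, smul_eq_mul]
    _ ≤ ∑ s ∈ SF, (PF.filter (fun v => MulAction.orbit G v = s)).card :=
        Finset.sum_le_sum hlow
    _ = PF.card := hfib.symm

end OrbitCount


section Acyclic

variable {V : Type*} [Fintype V]

lemma acyclic_of_card [DecidableEq V] {B : SimpleGraph V} [DecidableRel B.Adj]
    (hconn : B.Connected)
    (hcard : B.edgeFinset.card + 1 = Fintype.card V) : B.IsAcyclic := by
  classical
  rw [SimpleGraph.isAcyclic_iff_forall_adj_isBridge]
  intro v w hadj
  by_contra hnb
  rw [SimpleGraph.isBridge_iff] at hnb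
  have hreach : (B \ SimpleGraph.fromEdgeSet {s(v, w)}).Reachable v w := by
    by_contra hr
    exact hnb hr
  set B' : SimpleGraph V := B.deleteEdges {s(v, w)} with hB'
  have hB'eq : B' = B \ SimpleGraph.fromEdgeSet {s(v, w)} := rfl
  have hreach' : B'.Reachable v w := by rw [hB'eq]; exact hreach
  have hstep : ∀ x y : V, B.Adj x y → B'.Reachable x y := by
    intro x y hxy
    by_cases he : s(x, y) = s(v, w)
    · rcases Sym2.eq_iff.mp he with ⟨rfl, rfl⟩ | ⟨rfl, rfl⟩
      · exact hreach'
      · exact hreach'.symm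
    · refine SimpleGraph.Adj.reachable ?_
      rw [hB']
      rw [SimpleGraph.deleteEdges_adj]
      exact ⟨hxy, by simpa using he⟩
  have htrans : ∀ x y : V, B.Reachable x y → B'.Reachable x y := by
    intro x y hxy
    obtain ⟨p⟩ := hxy
    induction p with
    | nil => exact SimpleGraph.Reachable.refl _
    | cons h q ih => exact SimpleGraph.Reachable.trans (hstep _ _ h) ih
  have hconn' : B'.Connected := by
    rw [SimpleGraph.connected_iff]
    exact ⟨fun x y => htrans x y (hconn x y), hconn.nonempty⟩
  have hcard' := card_le_edge_add_one (B := B') hconn'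
  have hedges : B'.edgeFinset = B.edgeFinset.erase s(v, w) := by
    ext e
    simp only [SimpleGraph.mem_edgeFinset, Finset.mem_erase]
    rw [hB', SimpleGraph.edgeSet_deleteEdges]
    constructor
    · rintro ⟨h1, h2⟩
      exact ⟨by simpa using h2, h1⟩
    · rintro ⟨h1, h2⟩
      exact ⟨h2, by simpa using h1⟩
  have hmem : s(v, w) ∈ B.edgeFinset := SimpleGraph.mem_edgeFinset.mpr hadj
  have hcarderase : (B.edgeFinset.erase s(v, w)).card = B.edgeFinset.card - 1 :=
    Finset.card_erase_of_mem hmem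
  have hpos : 1 ≤ B.edgeFinset.card := Finset.card_pos.mpr ⟨_, hmem⟩
  rw [hedges, hcarderase] at hcard'
  omega

end Acyclic


section TreePath

variable {V : Type*} {G : Type*} [Group G] [MulAction G V]

open SimpleGraph.Walk

lemma isPath_concat' {B : SimpleGraph V} {u v w : V} {p : B.Walk u v} (hp : p.IsPath)
    (h : B.Adj v w) (hw : w ∉ p.support) : (p.concat h).IsPath := by
  rw [← SimpleGraph.Walk.isPath_reverse_iff, SimpleGraph.Walk.reverse_concat]
  rw [SimpleGraph.Walk.cons_isPath_iff]
  refine ⟨(SimpleGraph.Walk.isPath_reverse_iff p).mpr hp, ?_⟩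
  simpa using hw

lemma eq_of_walk_length_zero {B : SimpleGraph V} {a b : V} (p : B.Walk a b)
    (h : p.length = 0) : a = b := by
  cases p with
  | nil => rfl
  | cons _ _ => simp at h

lemma dist_ne_of_adj [DecidableEq V] {B : SimpleGraph V} (hconn : B.Connected)
    (hac : B.IsAcyclic)
    {a b : V} (hab : B.Adj a b) (v : V) : B.dist v a ≠ B.dist v b := by
  intro heq
  obtain ⟨p, hppath, hplen⟩ := hconn.exists_path_of_dist v a
  obtain ⟨q, hqpath, hqlen⟩ := hconn.exists_path_of_dist v b
  by_cases hmem : a ∈ q.support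
  · have hq1 : (q.takeUntil a hmem).IsPath := hqpath.takeUntil hmem
    have huniq : q.takeUntil a hmem = p :=
      congrArg Subtype.val (hac.path_unique ⟨q.takeUntil a hmem, hq1⟩ ⟨p, hppath⟩)
    have hlen : (q.takeUntil a hmem).length + (q.dropUntil a hmem).length = q.length := by
      have := congrArg SimpleGraph.Walk.length (q.take_spec hmem)
      rwa [SimpleGraph.Walk.length_append] at this
    rw [huniq, hplen, hqlen] at hlen
    have hdrop0 : (q.dropUntil a hmem).length = 0 := by omega
    exact hab.ne (eq_of_walk_length_zero _ hdrop0)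
  · set r : B.Walk v a := q.concat hab.symm with hr
    have hrpath : r.IsPath := isPath_concat' hqpath hab.symm hmem
    have huniq : r = p := congrArg Subtype.val (hac.path_unique ⟨r, hrpath⟩ ⟨p, hppath⟩)
    have hlen : r.length = q.length + 1 := SimpleGraph.Walk.length_concat _ _
    rw [huniq, hplen, hqlen] at hlen
    omega

lemma not_pivot_of_fixed_neighbor {B : SimpleGraph V} {v w : V}
    (hp : IsPivot B G v) (hadj : B.Adj v w)
    (hfix : ∀ h : MulAction.stabilizer G v, h • w = w) : False := by
  have horb : MulAction.orbit (MulAction.stabilizer G v) w = {w} := by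
    ext x
    constructor
    · rintro ⟨h, rfl⟩
      simp [hfix h]
    · rintro rfl
      exact MulAction.mem_orbit_self _
  have := hp w hadj
  rw [horb, Set.ncard_singleton] at this
  simp at this

lemma no_pivot_core {B : SimpleGraph V} (hconn : B.Connected) (hac : B.IsAcyclic)
    (hact : ∀ (g : G) (a b : V), B.Adj a b → B.Adj (g • a) (g • b))
    {a b : V} (hab : B.Adj a b)
    (hpair : ∀ g : G, (g • a = a ∧ g • b = b) ∨ (g • a = b ∧ g • b = a))
    {v : V} (hp : IsPivot B G v) (hlt : B.dist v a < B.dist v b) : False := by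
  have hfixa : ∀ h : MulAction.stabilizer G v, (h : G) • a = a := by
    intro h
    rcases hpair (h : G) with ⟨h1, _⟩ | ⟨h1, _⟩
    · exact h1
    · exfalso
      have hgv : (h : G) • v = v := h.2
      have e1 : B.dist ((h : G) • v) ((h : G) • a) = B.dist v a :=
        dist_smul B hact hconn _ v a
      rw [hgv, h1] at e1
      omega
  by_cases hva : v = a
  · subst hva
    refine not_pivot_of_fixed_neighbor hp hab (fun h => ?_)
    rcases hpair (h : G) with ⟨_, h2⟩ | ⟨h1, _⟩
    · exact h2
    · exact absurd (hfixa h) (by rw [h1]; exact hab.ne')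
  · have hd : B.dist v a ≠ 0 := fun h0 => hva (hconn.dist_eq_zero_iff.mp h0)
    obtain ⟨p, hppath, hplen⟩ := hconn.exists_path_of_dist v a
    cases p with
    | nil => exact hd (by rw [← hplen]; rfl)
    | @cons _ w _ hvw q =>
      refine not_pivot_of_fixed_neighbor hp hvw (fun h => ?_)
      set g : G := (h : G) with hg
      have hgv : g • v = v := h.2
      have hga : g • a = a := hfixa h
      have hinj : Function.Injective (fun x : V => g • x) := MulAction.injective g
      set p0 : B.Walk v a := SimpleGraph.Walk.cons hvw q with hp0
      set p'' : B.Walk v a := (p0.map (smulHom B hact g)).copy hgv hga with hp''def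
      have hp''path : p''.IsPath := by
        rw [hp''def]
        refine (SimpleGraph.Walk.isPath_copy _ _ _).mpr ?_
        exact SimpleGraph.Walk.map_isPath_of_injective hinj hppath
      have huniq : p'' = p0 := congrArg Subtype.val (hac.path_unique ⟨p'', hp''path⟩ ⟨p0, hppath⟩)
      have hsup : p''.support = List.map (fun x => g • x) p0.support := by
        rw [hp''def]
        refine (SimpleGraph.Walk.support_copy _ _ _).trans ?_
        rw [SimpleGraph.Walk.support_map]
        rfl
      obtain ⟨t, ht⟩ : ∃ t, q.support = w :: t := ⟨q.support.tail, q.support_eq_cons⟩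
      have h1 : p0.support = v :: w :: t := by
        rw [hp0, SimpleGraph.Walk.support_cons, ht]
      have h2 : List.map (fun x : V => g • x) p0.support
          = (g • v) :: (g • w) :: List.map (fun x : V => g • x) t := by
        rw [h1]
        simp
      have h3 : (g • v) :: (g • w) :: List.map (fun x : V => g • x) t
          = v :: w :: t := by
        rw [← h2, ← hsup, huniq, h1]
      have h4 := (List.cons.injEq _ _ _ _).mp h3
      have h5 := (List.cons.injEq _ _ _ _).mp h4.2
      exact h5.1

lemma no_pivot_of_invariant_edge {B : SimpleGraph V} (hconn : B.Connected) (hac : B.IsAcyclic)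
    (hact : ∀ (g : G) (a b : V), B.Adj a b → B.Adj (g • a) (g • b))
    {a b : V} (hab : B.Adj a b)
    (hpair : ∀ g : G, (g • a = a ∧ g • b = b) ∨ (g • a = b ∧ g • b = a))
    {v : V} (hp : IsPivot B G v) : False := by
  classical
  have hne := dist_ne_of_adj hconn hac hab v
  rcases lt_or_gt_of_ne hne with hlt | hlt
  · exact no_pivot_core hconn hac hact hab hpair hp hlt
  · refine no_pivot_core hconn hac hact hab.symm (fun g => ?_) hp hlt
    rcases hpair g with ⟨h1, h2⟩ | ⟨h1, h2⟩
    · exact Or.inl ⟨h2, h1⟩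
    · exact Or.inr ⟨h2, h1⟩

end TreePath


section Center

variable {V : Type*} [Fintype V] {G : Type*} [Group G] [MulAction G V]

lemma interior_two_nbrs {B : SimpleGraph V} :
    ∀ {a b : V} (p : B.Walk a b), p.IsPath → ∀ {x : V}, x ∈ p.support → x ≠ a → x ≠ b →
      ∃ y z, y ≠ z ∧ y ∈ p.support ∧ z ∈ p.support ∧ B.Adj x y ∧ B.Adj x z := by
  intro a b p
  induction p with
  | nil =>
    intro _ x hx hxa _
    simp only [SimpleGraph.Walk.support_nil, List.mem_singleton] at hx
    exact absurd hx hxa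
  | @cons a c b h q ih =>
    intro hp x hx hxa hxb
    have hp' : q.IsPath := ((SimpleGraph.Walk.cons_isPath_iff h q).mp hp).1
    have hanq : a ∉ q.support := ((SimpleGraph.Walk.cons_isPath_iff h q).mp hp).2
    rw [SimpleGraph.Walk.support_cons, List.mem_cons] at hx
    rcases hx with rfl | hxq
    · exact absurd rfl hxa
    · by_cases hxc : x = c
      · subst hxc
        cases q with
        | nil => exact absurd rfl hxb
        | @cons _ d _ h2 q2 =>
          have hd : d ∈ (SimpleGraph.Walk.cons h2 q2).support := by
            rw [SimpleGraph.Walk.support_cons]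
            exact List.mem_cons_of_mem _ q2.start_mem_support
          refine ⟨a, d, ?_, ?_, ?_, h.symm, h2⟩
          · intro hda
            subst hda
            exact hanq hd
          · rw [SimpleGraph.Walk.support_cons]
            exact List.mem_cons_self
          · rw [SimpleGraph.Walk.support_cons]
            exact List.mem_cons_of_mem _ hd
      · obtain ⟨y, z, hyz, hy, hz, hxy, hxz⟩ := ih hp' hxq hxc hxb
        exact ⟨y, z, hyz, by rw [SimpleGraph.Walk.support_cons]; exact List.mem_cons_of_mem _ hy,
          by rw [SimpleGraph.Walk.support_cons]; exact List.mem_cons_of_mem _ hz, hxy, hxz⟩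

lemma edgesIn_card_lt [DecidableEq V] {B : SimpleGraph V} [DecidableRel B.Adj]
    (hconn : B.Connected) (hcard : B.edgeFinset.card + 1 = Fintype.card V)
    {W : Finset V} (hWne : W.Nonempty) :
    (edgesIn B (↑W : Set V)).card + 1 ≤ W.card := by
  classical
  set S : Set V := (↑W : Set V) with hSdef
  have hS : S.Nonempty := ⟨hWne.choose, by rw [hSdef, Finset.mem_coe]; exact hWne.choose_spec⟩
  have hmaster := master_count (B := B) (S := S)
  have hpoint : ∀ v ∈ (Finset.univ : Finset V),
      (if v ∉ S then 1 else 0) ≤ (downF B S v).card := by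
    intro v _
    by_cases hvS : v ∈ S
    · simp [hvS]
    · obtain ⟨w, hw1, hw2⟩ := hdist_descend hconn hS hvS
      have : 1 ≤ (downF B S v).card := by
        refine Finset.card_pos.mpr ⟨w, ?_⟩
        simp [downF, hw1, hw2]
      simpa [hvS] using this
  have hsum := Finset.sum_le_sum hpoint
  have hsplit : (∑ v : V, (if v ∉ S then 1 else 0))
      = (Finset.univ.filter (fun v : V => v ∉ S)).card := by
    rw [Finset.card_filter]
  have hcards : (Finset.univ.filter (fun v : V => v ∈ S)).card
      + (Finset.univ.filter (fun v : V => v ∉ S)).card = Fintype.card V := by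
    rw [← Finset.card_univ]
    exact Finset.card_filter_add_card_filter_not _
  have hWcard : (Finset.univ.filter (fun v : V => v ∈ S)).card = W.card := by
    congr 1
    ext x
    simp [hSdef]
  have hWpos : 1 ≤ W.card := Finset.card_pos.mpr hWne
  omega

lemma handshake_W [DecidableEq V] {B : SimpleGraph V} [DecidableRel B.Adj] (W : Finset V) :
    ∑ v ∈ W, (W.filter (fun w => B.Adj v w)).card = 2 * (edgesIn B (↑W : Set V)).card := by
  classical
  set B' : SimpleGraph {x // x ∈ W} := B.comap (Subtype.val) with hB'
  have hadj : ∀ (x y : {x // x ∈ W}), B'.Adj x y ↔ B.Adj x.val y.val := fun x y => Iff.rfl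
  have hdeg : ∀ (x : {x // x ∈ W}), B'.degree x = (W.filter (fun w => B.Adj x.val w)).card := by
    intro x
    rw [SimpleGraph.degree]
    refine Finset.card_bij (fun y _ => y.val) ?_ ?_ ?_
    · intro y hy
      rw [SimpleGraph.mem_neighborFinset] at hy
      exact Finset.mem_filter.mpr ⟨y.property, (hadj x y).mp hy⟩
    · intro y1 _ y2 _ hh
      exact Subtype.ext hh
    · intro w hw
      rw [Finset.mem_filter] at hw
      refine ⟨⟨w, hw.1⟩, ?_, rfl⟩
      rw [SimpleGraph.mem_neighborFinset]
      exact (hadj x _).mpr hw.2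
  have hedge : B'.edgeFinset.card = (edgesIn B (↑W : Set V)).card := by
    refine Finset.card_bij (fun e _ => Sym2.map Subtype.val e) ?_ ?_ ?_
    · intro e he
      refine e.ind (fun x y he => ?_) he
      rw [SimpleGraph.mem_edgeFinset, SimpleGraph.mem_edgeSet] at he
      show Sym2.map Subtype.val s(x, y) ∈ edgesIn B (↑W : Set V)
      rw [Sym2.map_pair_eq, mem_edgesIn]
      refine ⟨?_, ?_⟩
      · rw [SimpleGraph.mem_edgeFinset, SimpleGraph.mem_edgeSet]
        exact (hadj x y).mp he
      · intro z hz
        rw [Sym2.mem_iff] at hz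
        rcases hz with rfl | rfl
        · exact x.property
        · exact y.property
    · intro e1 _ e2 _ hh
      exact Sym2.map.injective Subtype.val_injective hh
    · intro e he
      rw [mem_edgesIn] at he
      obtain ⟨he1, he2⟩ := he
      induction e with
      | _ x y =>
        have hx : x ∈ W := he2 x (by rw [Sym2.mem_iff]; left; rfl)
        have hy : y ∈ W := he2 y (by rw [Sym2.mem_iff]; right; rfl)
        refine ⟨s(⟨x, hx⟩, ⟨y, hy⟩), ?_, by
          show Sym2.map Subtype.val s(⟨x, hx⟩, ⟨y, hy⟩) = s(x, y)
          rw [Sym2.map_pair_eq]⟩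
        rw [SimpleGraph.mem_edgeFinset, SimpleGraph.mem_edgeSet]
        rw [SimpleGraph.mem_edgeFinset, SimpleGraph.mem_edgeSet] at he1
        exact (hadj _ _).mpr he1
  have hhs := SimpleGraph.sum_degrees_eq_twice_card_edges B'
  rw [hedge] at hhs
  rw [← hhs]
  rw [← Finset.sum_coe_sort W (fun v => (W.filter (fun w => B.Adj v w)).card)]
  exact Finset.sum_congr rfl (fun x _ => (hdeg x).symm)

lemma exists_leaf [DecidableEq V] {B : SimpleGraph V} [DecidableRel B.Adj]
    (hconn : B.Connected) (hcard : B.edgeFinset.card + 1 = Fintype.card V)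
    {W : Finset V} (hWne : W.Nonempty) :
    ∃ v ∈ W, (W.filter (fun w => B.Adj v w)).card ≤ 1 := by
  classical
  by_contra hno
  push_neg at hno
  have hlow : ∀ v ∈ W, 2 ≤ (W.filter (fun w => B.Adj v w)).card := fun v hv => hno v hv
  have h1 : 2 * W.card ≤ ∑ v ∈ W, (W.filter (fun w => B.Adj v w)).card := by
    calc 2 * W.card = ∑ _v ∈ W, 2 := by rw [Finset.sum_const, smul_eq_mul, mul_comm]
    _ ≤ _ := Finset.sum_le_sum hlow
  rw [handshake_W] at h1
  have h2 := edgesIn_card_lt hconn hcard hWne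
  omega

lemma degW_smul [DecidableEq V] {B : SimpleGraph V} [DecidableRel B.Adj]
    (hact : ∀ (g : G) (a b : V), B.Adj a b → B.Adj (g • a) (g • b))
    {W : Finset V} (hWinv : ∀ (g : G) (v : V), v ∈ W → g • v ∈ W) (g : G) (v : V) :
    (W.filter (fun w => B.Adj (g • v) w)).card = (W.filter (fun w => B.Adj v w)).card := by
  refine (Finset.card_bij (fun w _ => g • w) ?_ ?_ ?_).symm
  · intro w hw
    rw [Finset.mem_filter] at hw ⊢
    exact ⟨hWinv g w hw.1, hact g v w hw.2⟩
  · intro w1 _ w2 _ hh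
    exact MulAction.injective g hh
  · intro u hu
    rw [Finset.mem_filter] at hu
    refine ⟨g⁻¹ • u, ?_, by simp⟩
    rw [Finset.mem_filter]
    refine ⟨hWinv g⁻¹ u hu.1, ?_⟩
    have := hact g⁻¹ _ _ hu.2
    simpa using this

lemma center_lemma [DecidableEq V] {B : SimpleGraph V} [DecidableRel B.Adj]
    (hconn : B.Connected)
    (hact : ∀ (g : G) (a b : V), B.Adj a b → B.Adj (g • a) (g • b))
    (hcard : B.edgeFinset.card + 1 = Fintype.card V) :
    ∀ (k : ℕ) (W : Finset V), W.card ≤ k → W.Nonempty →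
      (∀ (g : G) (v : V), v ∈ W → g • v ∈ W) →
      (∀ a ∈ W, ∀ b ∈ W, ∃ p : B.Walk a b, ∀ x ∈ p.support, x ∈ W) →
      ((∃ f ∈ W, ∀ g : G, g • f = f) ∨
        (∃ a ∈ W, ∃ b ∈ W, B.Adj a b ∧
          (∀ g : G, (g • a = a ∧ g • b = b) ∨ (g • a = b ∧ g • b = a)))) := by
  intro k
  induction k with
  | zero =>
    intro W hWk hWne _ _
    have := Finset.card_pos.mpr hWne
    omega
  | succ k ih =>
    intro W hWk hWne hWinv hWconn
    set W' : Finset V := W.filter (fun v => 2 ≤ (W.filter (fun w => B.Adj v w)).card) with hW'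
    have hW'sub : W' ⊆ W := Finset.filter_subset _ _
    obtain ⟨l, hlW, hl⟩ := exists_leaf hconn hcard hWne
    have hlnW' : l ∉ W' := by
      rw [hW', Finset.mem_filter]
      rintro ⟨-, h2⟩
      omega
    have hW'lt : W'.card < W.card :=
      Finset.card_lt_card (Finset.ssubset_iff_of_subset hW'sub |>.mpr ⟨l, hlW, hlnW'⟩)
    by_cases hW'ne : W'.Nonempty
    · -- recurse on W'
      have hW'inv : ∀ (g : G) (v : V), v ∈ W' → g • v ∈ W' := by
        intro g v hv
        rw [hW', Finset.mem_filter] at hv ⊢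
        exact ⟨hWinv g v hv.1, by rw [degW_smul hact hWinv]; exact hv.2⟩
      have hW'conn : ∀ a ∈ W', ∀ b ∈ W', ∃ p : B.Walk a b, ∀ x ∈ p.support, x ∈ W' := by
        intro a ha b hb
        obtain ⟨p0, hp0⟩ := hWconn a (hW'sub ha) b (hW'sub hb)
        refine ⟨p0.bypass, ?_⟩
        intro x hx
        have hxW : ∀ y ∈ p0.bypass.support, y ∈ W :=
          fun y hy => hp0 y (p0.support_bypass_subset hy)
        by_cases hxa : x = a
        · subst hxa; exact ha
        by_cases hxb : x = b
        · subst hxb; exact hb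
        obtain ⟨y, z, hyz, hy, hz, hxy, hxz⟩ :=
          interior_two_nbrs p0.bypass p0.bypass_isPath hx hxa hxb
        rw [hW', Finset.mem_filter]
        refine ⟨hxW x hx, ?_⟩
        refine Finset.one_lt_card.mpr ⟨y, ?_, z, ?_, hyz⟩
        · exact Finset.mem_filter.mpr ⟨hxW y hy, hxy⟩
        · exact Finset.mem_filter.mpr ⟨hxW z hz, hxz⟩
      rcases ih W' (by omega) hW'ne hW'inv hW'conn with ⟨f, hf, hfix⟩ | ⟨a, ha, b, hb, hres⟩
      · exact Or.inl ⟨f, hW'sub hf, hfix⟩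
      · exact Or.inr ⟨a, hW'sub ha, b, hW'sub hb, hres⟩
    · -- W' empty : all degrees ≤ 1
      have hdeg : ∀ v ∈ W, (W.filter (fun w => B.Adj v w)).card ≤ 1 := by
        intro v hv
        by_contra hc
        exact hW'ne ⟨v, by rw [hW', Finset.mem_filter]; exact ⟨hv, by omega⟩⟩
      have hpairadj : ∀ x ∈ W, ∀ y ∈ W, x ≠ y → B.Adj x y := by
        intro x hx y hy hxy
        obtain ⟨p0, hp0⟩ := hWconn x hx y hy
        have hsup : ∀ z ∈ p0.bypass.support, z ∈ W :=
          fun z hz => hp0 z (p0.support_bypass_subset hz)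
        have hpath := p0.bypass_isPath
        set q := p0.bypass with hq
        clear_value q
        cases q with
        | nil => exact absurd rfl hxy
        | @cons _ c _ h q2 =>
          cases q2 with
          | nil => exact h
          | @cons _ d _ h2 q3 =>
            exfalso
            have hxnq : x ∉ (SimpleGraph.Walk.cons h2 q3).support :=
              ((SimpleGraph.Walk.cons_isPath_iff _ _).mp hpath).2
            have hcx : c ≠ x := by
              intro hcx
              subst hcx
              exact hxnq (SimpleGraph.Walk.start_mem_support _)
            have hcy : c ≠ y := by
              intro hcy
              subst hcy
              have : (SimpleGraph.Walk.cons h2 q3).IsPath :=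
                ((SimpleGraph.Walk.cons_isPath_iff _ _).mp hpath).1
              rw [SimpleGraph.Walk.isPath_iff_eq_nil] at this
              simp at this
            have hcmem : c ∈ (SimpleGraph.Walk.cons h (SimpleGraph.Walk.cons h2 q3)).support := by
              rw [SimpleGraph.Walk.support_cons]
              exact List.mem_cons_of_mem _ (SimpleGraph.Walk.start_mem_support _)
            obtain ⟨y1, z1, hyz1, hy1, hz1, hcy1, hcz1⟩ :=
              interior_two_nbrs _ hpath hcmem hcx hcy
            have : 2 ≤ (W.filter (fun w => B.Adj c w)).card := by
              refine Finset.one_lt_card.mpr ⟨y1, ?_, z1, ?_, hyz1⟩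
              · exact Finset.mem_filter.mpr ⟨hsup y1 hy1, hcy1⟩
              · exact Finset.mem_filter.mpr ⟨hsup z1 hz1, hcz1⟩
            have := hdeg c (hsup c hcmem)
            omega
      by_cases hsing : ∀ x ∈ W, ∀ y ∈ W, x = y
      · obtain ⟨f, hf⟩ := hWne
        exact Or.inl ⟨f, hf, fun g => hsing _ (hWinv g f hf) _ hf⟩
      · push_neg at hsing
        obtain ⟨x, hx, y, hy, hxy⟩ := hsing
        have hadjxy : B.Adj x y := hpairadj x hx y hy hxy
        have hWxy : ∀ z ∈ W, z = x ∨ z = y := by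
          intro z hz
          by_contra hc
          push_neg at hc
          have h1 : B.Adj z x := hpairadj z hz x hx hc.1
          have h2 : B.Adj z y := hpairadj z hz y hy hc.2
          have : 2 ≤ (W.filter (fun w => B.Adj z w)).card := by
            refine Finset.one_lt_card.mpr ⟨x, ?_, y, ?_, hxy⟩
            · exact Finset.mem_filter.mpr ⟨hx, h1⟩
            · exact Finset.mem_filter.mpr ⟨hy, h2⟩
          have := hdeg z hz
          omega
        refine Or.inr ⟨x, hx, y, hy, hadjxy, fun g => ?_⟩
        rcases hWxy _ (hWinv g x hx) with hgx | hgx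
        · left
          refine ⟨hgx, ?_⟩
          rcases hWxy _ (hWinv g y hy) with hgy | hgy
          · exfalso
            have : x = y := MulAction.injective g (by show g • x = g • y; rw [hgx, hgy])
            exact hxy this
          · exact hgy
        · right
          refine ⟨hgx, ?_⟩
          rcases hWxy _ (hWinv g y hy) with hgy | hgy
          · exact hgy
          · exfalso
            have : x = y := MulAction.injective g (by show g • x = g • y; rw [hgx, hgy])
            exact hxy this


end Center


end StmtAux

/-- If a group `G` acts on a finite connected graph `B` by graph automorphisms and the number of
`G`-orbits of `G`-pivot vertices equals `β(B) + 1`, then either the `G`-pivot vertices are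
exactly the `G`-fixed vertices, or `β(B) = 1` and `B` has no `G`-fixed vertex. -/
theorem stmt_6 {V : Type*} [Fintype V] (B : SimpleGraph V)
    (G : Type*) [Group G] [MulAction G V]
    (hact : ∀ (g : G) (a b : V), B.Adj a b → B.Adj (g • a) (g • b))
    (hconn : B.Connected)
    (hN : ({s : Set V | ∃ v : V, IsPivot B G v ∧ s = MulAction.orbit G v}.ncard : ℤ)
      = ((B.edgeSet.ncard : ℤ) - (Fintype.card V : ℤ) + 1) + 1) :
    ({v : V | IsPivot B G v} = {v : V | ∀ g : G, g • v = v})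
      ∨ ((B.edgeSet.ncard : ℤ) - (Fintype.card V : ℤ) + 1 = 1
          ∧ ∀ v : V, ∃ g : G, g • v ≠ v) := by
  classical
  open StmtAux in
  set n : ℕ := Fintype.card V with hn
  set N : ℕ := {s : Set V | ∃ v : V, IsPivot B G v ∧ s = MulAction.orbit G v}.ncard with hNdef
  have hedge : B.edgeSet.ncard = B.edgeFinset.card := by
    rw [← SimpleGraph.coe_edgeFinset, Set.ncard_coe_finset]
  set m : ℕ := B.edgeFinset.card with hm
  have hNn : N + n = m + 2 := by
    have : (N : ℤ) + n = m + 2 := by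
      rw [hedge] at hN
      omega
    exact_mod_cast this
  have hPF : {v : V | IsPivot B G v}.ncard
      = (Finset.univ.filter (fun v => IsPivot B G v)).card := by
    rw [Set.ncard_eq_toFinset_card']
    congr 1
    ext x
    simp
  have hNleP : N ≤ {v : V | IsPivot B G v}.ncard := npivot_le_pivot
  have hnm : n ≤ m + 1 := card_le_edge_add_one hconn
  -- Claim I : every fixed vertex is a pivot
  have claimI : ∀ f : V, (∀ g : G, g • f = f) → IsPivot B G f := by
    intro f hf
    by_contra hnp
    have horb : MulAction.orbit G f = {f} := by
      ext x
      constructor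
      · rintro ⟨g, rfl⟩
        simp [hf g]
      · rintro rfl
        exact MulAction.mem_orbit_self _
    have hkey := key_inequality (B := B) hact hconn f
    rw [horb, Set.ncard_singleton] at hkey
    have hset : {v : V | IsPivot B G v ∧ v ∉ ({f} : Set V)} = {v : V | IsPivot B G v} := by
      ext v
      simp only [Set.mem_setOf_eq, Set.mem_singleton_iff, and_iff_left_iff_imp]
      intro hv hveq
      subst hveq
      exact hnp hv
    rw [hset] at hkey
    omega
  by_cases hcase : ∃ f : V, IsPivot B G f ∧ ∀ g : G, g • f = f
  · -- pivots = fixed vertices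
    left
    obtain ⟨f₀, hf₀p, hf₀fix⟩ := hcase
    have horb : MulAction.orbit G f₀ = {f₀} := by
      ext x
      constructor
      · rintro ⟨g, rfl⟩
        simp [hf₀fix g]
      · rintro rfl
        exact MulAction.mem_orbit_self _
    have hkey := key_inequality (B := B) hact hconn f₀
    rw [horb, Set.ncard_singleton] at hkey
    have hset : {v : V | IsPivot B G v ∧ v ∉ ({f₀} : Set V)}
        = {v : V | IsPivot B G v} \ {f₀} := by
      ext v
      simp [Set.mem_diff]
    have hdiff : ({v : V | IsPivot B G v} \ {f₀}).ncard + 1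
        = {v : V | IsPivot B G v}.ncard :=
      Set.ncard_diff_singleton_add_one hf₀p (Set.toFinite _)
    rw [hset] at hkey
    have hPle : {v : V | IsPivot B G v}.ncard ≤ N := by omega
    have hallfix := all_fixed_of_card_le hact hPle
    ext v
    simp only [Set.mem_setOf_eq]
    exact ⟨fun hv => hallfix v hv, fun hv => claimI v hv⟩
  · -- no fixed pivot
    right
    have hF : ∀ v : V, ∃ g : G, g • v ≠ v := by
      intro v
      by_contra hc
      push_neg at hc
      exact hcase ⟨v, claimI v hc, hc⟩
    refine ⟨?_, hF⟩
    -- it suffices to show N = 2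
    suffices hN2 : N = 2 by
      rw [hedge]
      have : (N : ℤ) + n = m + 2 := by exact_mod_cast hNn
      omega
    have hN1 : 1 ≤ N := by omega
    -- pivots exist
    have hPFne : (Finset.univ.filter (fun v => IsPivot B G v)).Nonempty := by
      rw [← Finset.card_pos, ← hPF]
      omega
    obtain ⟨v₀, hv₀mem, hv₀min⟩ :=
      Finset.exists_min_image _ (fun v => (MulAction.orbit G v).ncard) hPFne
    have hv₀p : IsPivot B G v₀ := by simpa using hv₀mem
    set s₀ : ℕ := (MulAction.orbit G v₀).ncard with hs₀
    have hs₀2 : 2 ≤ s₀ := by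
      obtain ⟨g, hg⟩ := hF v₀
      have h2 : 1 < (MulAction.orbit G v₀).ncard := by
        rw [Set.one_lt_ncard_iff (Set.toFinite _)]
        exact ⟨g • v₀, v₀, ⟨g, rfl⟩, MulAction.mem_orbit_self _, hg⟩
      omega
    have hmin : ∀ v : V, IsPivot B G v → s₀ ≤ (MulAction.orbit G v).ncard := by
      intro v hv
      exact hv₀min v (by simpa using hv)
    have hNs := min_orbit_bound hact hv₀p hmin
    have hkey := key_inequality (B := B) hact hconn v₀
    have hsub : MulAction.orbit G v₀ ⊆ {v : V | IsPivot B G v} := by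
      rintro x ⟨g, rfl⟩
      exact isPivot_smul B hact hv₀p g
    have hset : {v : V | IsPivot B G v ∧ v ∉ MulAction.orbit G v₀}
        = {v : V | IsPivot B G v} \ MulAction.orbit G v₀ := by
      ext v
      simp [Set.mem_diff]
    rw [hset] at hkey
    have hPn : ({v : V | IsPivot B G v} \ MulAction.orbit G v₀).ncard + s₀
        = {v : V | IsPivot B G v}.ncard :=
      Set.ncard_diff_add_ncard_of_subset hsub (Set.toFinite _)
    have hcombZ : (N : ℤ) * s₀ + 2 ≤ N + 2 * s₀ := by
      have h1 : N * s₀ ≤ ({v : V | IsPivot B G v} \ MulAction.orbit G v₀).ncard + s₀ := by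
        rw [hPn]
        exact hNs
      have h1' : (N : ℤ) * s₀
          ≤ (({v : V | IsPivot B G v} \ MulAction.orbit G v₀).ncard : ℤ) + s₀ := by
        exact_mod_cast h1
      have h2' : (n : ℤ) + (({v : V | IsPivot B G v} \ MulAction.orbit G v₀).ncard : ℤ)
          ≤ m + s₀ := by exact_mod_cast hkey
      have h3' : (N : ℤ) + n = m + 2 := by exact_mod_cast hNn
      linarith
    have hNle2 : N ≤ 2 := by
      by_contra hc
      push_neg at hc
      have h1 : (1 : ℤ) ≤ (N : ℤ) - 2 := by
        have : (3 : ℤ) ≤ (N : ℤ) := by exact_mod_cast hc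
        linarith
      have h2 : (1 : ℤ) ≤ (s₀ : ℤ) - 1 := by
        have : (2 : ℤ) ≤ (s₀ : ℤ) := by exact_mod_cast hs₀2
        linarith
      have h3 : (1 : ℤ) * 1 ≤ ((N : ℤ) - 2) * ((s₀ : ℤ) - 1) :=
        mul_le_mul h1 h2 (by norm_num) (by linarith)
      have hexp : ((N : ℤ) - 2) * ((s₀ : ℤ) - 1) = (N : ℤ) * s₀ + 2 - N - 2 * s₀ := by ring
      rw [hexp] at h3
      linarith
    -- exclude N = 1
    rcases Nat.lt_or_ge N 2 with hNlt | hNge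
    · exfalso
      have hN1' : N = 1 := by omega
      have hcard : B.edgeFinset.card + 1 = Fintype.card V := by omega
      have hac := acyclic_of_card hconn hcard
      have huniv_ne : (Finset.univ : Finset V).Nonempty := by
        obtain ⟨x⟩ := hconn.nonempty
        exact ⟨x, Finset.mem_univ x⟩
      have hcenter := center_lemma (G := G) hconn hact hcard (Fintype.card V)
        Finset.univ (by rw [Finset.card_univ]) huniv_ne
        (fun g v _ => Finset.mem_univ _)
        (fun a _ b _ => by
          obtain ⟨p⟩ := hconn a b
          exact ⟨p, fun x _ => Finset.mem_univ x⟩)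
      rcases hcenter with ⟨f, _, hfix⟩ | ⟨a, _, b, _, hab, hpair⟩
      · obtain ⟨g, hg⟩ := hF f
        exact hg (hfix g)
      · exact no_pivot_of_invariant_edge hconn hac hact hab hpair hv₀p
    · omega
end
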